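/- arXiv:2404.06843 — 2 statements merged into one kernel-verified Lean document; each statement's English description precedes it below -/
import Mathlib

section
/- Let G be a connected finite simple graph, x a Perron vector of G, and u* a vertex at which x attains its maximum. Suppose the induced subgraph G[N(u*)] contains no path on 6 vertices as a subgraph. Let H be a connected component of G[N(u*)] having at least two vertices, with minimum degree δ(H) ≥ 2. Then η(H) ≤ 0; moreover η(H) ≤ −1 if H is not isomorphic to K_5; η(H) ≤ −2 if H is isomorphic to neither K_5 nor K_5 − e; and η(H) ≤ −3 if H is not isomorphic to any of K_5, K_5 − e, K_4, or K_5 with two edges removed. -/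
open Matrix Finset

/-- The spectral radius of a finite simple graph: the largest (real) eigenvalue of its
adjacency matrix, expressed as the supremum of the set of real eigenvalues. -/
noncomputable def specRad {V : Type*} [Fintype V] (G : SimpleGraph V)
    [DecidableRel G.Adj] : ℝ :=
  sSup {t : ℝ | ∃ x : V → ℝ, x ≠ 0 ∧ (G.adjMatrix ℝ) *ᵥ x = t • x}

/-- `H` is contained in `G` as a (not necessarily induced) subgraph. -/
def ContainsSub {α β : Type*} (H : SimpleGraph α) (G : SimpleGraph β) : Prop :=
  ∃ f : α → β, Function.Injective f ∧ ∀ ⦃a b⦄, H.Adj a b → G.Adj (f a) (f b)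

/-- The fan graph `H₇ = K₁ ∨ P₆`: vertex `6` is joined to every vertex of the
path `0-1-2-3-4-5`. -/
def fanH7 : SimpleGraph (Fin 7) :=
  SimpleGraph.fromRel (fun i j => i = 6 ∨ j = 6 ∨ (j : ℕ) = (i : ℕ) + 1)

/-- A graph is `H₇`-free if it contains no subgraph isomorphic to the fan `H₇`. -/
def H7Free {β : Type*} (G : SimpleGraph β) : Prop := ¬ ContainsSub fanH7 G

/-- `K₃ ∨ kK₁`: the join of a triangle (vertices `0,1,2`) with `k` isolated vertices. -/
def K3Join (k : ℕ) : SimpleGraph (Fin (k + 3)) :=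
  SimpleGraph.fromRel (fun i j => (i : ℕ) < 3 ∨ (j : ℕ) < 3)

instance (k : ℕ) : DecidableRel (K3Join k).Adj := fun a b =>
  decidable_of_iff (a ≠ b ∧ ((a : ℕ) < 3 ∨ (b : ℕ) < 3)) (by
    rw [K3Join, SimpleGraph.fromRel_adj]; tauto)

/-- `K₂ ∨ tK₁`: the join of an edge (vertices `0,1`) with `t` isolated vertices. -/
def K2Join (t : ℕ) : SimpleGraph (Fin (t + 2)) :=
  SimpleGraph.fromRel (fun i j => (i : ℕ) < 2 ∨ (j : ℕ) < 2)

/-- The star `K_{1,s}`: vertex `0` joined to `s` independent vertices. -/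
def starGraph (s : ℕ) : SimpleGraph (Fin (s + 1)) :=
  SimpleGraph.fromRel (fun i j => i = 0 ∨ j = 0)

/-- `K₁ ∨ (K₃ ∪ tK₁)`: vertex `0` joined to all of a triangle `1,2,3` and to `t`
further vertices which are otherwise isolated. -/
def K1JoinK3Union (t : ℕ) : SimpleGraph (Fin (t + 4)) :=
  SimpleGraph.fromRel (fun i j => i = 0 ∨ j = 0 ∨ ((i : ℕ) ≤ 3 ∧ (j : ℕ) ≤ 3))

/-- `C₆^△`: a 6-cycle `0-1-2-3-4-5-0` plus a vertex `6` adjacent to the two adjacent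
cycle vertices `0` and `1`. -/
def C6Tri : SimpleGraph (Fin 7) :=
  SimpleGraph.fromRel (fun i j =>
    ((i : ℕ) < 6 ∧ (j : ℕ) = ((i : ℕ) + 1) % 6) ∨ (i = 6 ∧ (j = 0 ∨ j = 1)))

/-- `F₃`: three triangles `{0,1,2}`, `{0,3,4}`, `{0,5,6}` sharing the common vertex `0`. -/
def friendshipF3 : SimpleGraph (Fin 7) :=
  SimpleGraph.fromRel (fun i j =>
    i = 0 ∨ j = 0 ∨ ((j : ℕ) = (i : ℕ) + 1 ∧ (i : ℕ) % 2 = 1))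

/-- The number of edges of `G` with both end vertices in `S`. -/
noncomputable def edgesIn {V : Type*} (G : SimpleGraph V) (S : Set V) : ℕ :=
  {e ∈ G.edgeSet | ∀ v ∈ e, v ∈ S}.ncard

/-- The quantity `η(H)` for the subgraph `H = G[S]` induced on a vertex set `S`:
`η(H) = Σ_{u ∈ S} (d_H(u) − 2)·x_u/x_{u*} − e(H)`. -/
noncomputable def etaVal {V : Type*} [Fintype V] [DecidableEq V] (G : SimpleGraph V)
    [DecidableRel G.Adj] (x : V → ℝ) (ustar : V) (S : Finset V) : ℝ :=
  (∑ u ∈ S, (((S.filter (fun w => G.Adj u w)).card : ℝ) - 2) * x u / x ustar)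
    - edgesIn G (S : Set V)

/-- `H` is isomorphic to `K₅` with two (distinct) edges removed, in either configuration. -/
def IsK5Minus2e {α : Type*} (H : SimpleGraph α) : Prop :=
  ∃ e₁ e₂ : Sym2 (Fin 5), ¬ e₁.IsDiag ∧ ¬ e₂.IsDiag ∧ e₁ ≠ e₂ ∧
    Nonempty (H ≃g (⊤ : SimpleGraph (Fin 5)).deleteEdges {e₁, e₂})
section Counting
variable {V : Type} [Fintype V] [DecidableEq V] (G : SimpleGraph V) [DecidableRel G.Adj]
  (S : Finset V)

lemma edgesIn_eq_card :
    edgesIn G (S : Set V) = (G.edgeFinset.filter (fun e => ∀ v ∈ e, v ∈ S)).card := by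
  rw [edgesIn, ← Set.ncard_coe_finset]
  congr 1
  ext e
  simp [SimpleGraph.mem_edgeFinset]

lemma handshake :
    ∑ u ∈ S, (S.filter (fun w => G.Adj u w)).card
      = 2 * edgesIn G (S : Set V) := by
  rw [edgesIn_eq_card]
  set E := G.edgeFinset.filter (fun e => ∀ v ∈ e, v ∈ S) with hE
  set P := (S ×ˢ S).filter (fun p => G.Adj p.1 p.2) with hP
  have h1 : P.card = ∑ u ∈ S, (S.filter (fun w => G.Adj u w)).card := by
    rw [Finset.card_eq_sum_card_fiberwise (f := Prod.fst) (t := S)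
      (by intro p hp; simp [hP] at hp; exact hp.1.1)]
    refine Finset.sum_congr rfl fun u hu => ?_
    refine Finset.card_nbij (fun p => p.2) ?_ ?_ ?_
    · intro p hp; simp [hP] at hp ⊢; rcases hp with ⟨⟨⟨_, h2⟩, h3⟩, h4⟩
      subst h4; exact ⟨h2, h3⟩
    · intro p hp q hq hpq
      simp [hP] at hp hq
      exact Prod.ext (hp.2.trans hq.2.symm) hpq
    · intro v hv
      simp only [Finset.coe_filter, Set.mem_setOf_eq, Finset.mem_coe, Finset.mem_filter] at hv
      refine ⟨(u, v), ?_, rfl⟩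
      simp only [Finset.coe_filter, Set.mem_setOf_eq, Finset.mem_coe, Finset.mem_filter, hP,
        Finset.mem_product]
      exact ⟨⟨⟨hu, hv.1⟩, hv.2⟩, trivial⟩
  have h2 : P.card = ∑ e ∈ E, 2 := by
    rw [Finset.card_eq_sum_card_fiberwise (f := fun p => s(p.1, p.2)) (t := E)
      (by
        intro p hp
        obtain ⟨a, b⟩ := p
        simp [hP] at hp
        simp only [hE, Finset.mem_coe, Finset.mem_filter, SimpleGraph.mem_edgeFinset, SimpleGraph.mem_edgeSet]
        refine ⟨hp.2, ?_⟩
        intro v hv; rw [Sym2.mem_iff] at hv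
        rcases hv with h | h <;> subst h
        · exact hp.1.1
        · exact hp.1.2)]
    refine Finset.sum_congr rfl fun e he => ?_
    simp only [hE, Finset.mem_filter, SimpleGraph.mem_edgeFinset] at he
    induction e with
    | _ a b =>
      have hadj : G.Adj a b := he.1
      have haS : a ∈ S := he.2 a (by simp)
      have hbS : b ∈ S := he.2 b (by simp)
      have : P.filter (fun p => s(p.1, p.2) = s(a, b)) = {(a, b), (b, a)} := by
        ext ⟨u, v⟩
        simp only [Finset.mem_filter, hP, Finset.mem_product, Finset.mem_insert,
          Finset.mem_singleton, Sym2.eq_iff, Prod.mk.injEq]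
        constructor
        · rintro ⟨_, (⟨rfl, rfl⟩ | ⟨rfl, rfl⟩)⟩
          · left; exact ⟨rfl, rfl⟩
          · right; exact ⟨rfl, rfl⟩
        · rintro (⟨rfl, rfl⟩ | ⟨rfl, rfl⟩)
          · exact ⟨⟨⟨haS, hbS⟩, hadj⟩, Or.inl ⟨rfl, rfl⟩⟩
          · exact ⟨⟨⟨hbS, haS⟩, hadj.symm⟩, Or.inr ⟨rfl, rfl⟩⟩
      rw [this, Finset.card_insert_of_notMem (by simp [hadj.ne]), Finset.card_singleton]
  rw [Finset.sum_const, smul_eq_mul] at h2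
  omega

lemma deg_lt_card {u : V} (hu : u ∈ S) :
    (S.filter (fun w => G.Adj u w)).card + 1 ≤ S.card := by
  have h : S.filter (fun w => G.Adj u w) ⊆ S.erase u := by
    intro v hv
    simp only [Finset.mem_filter] at hv
    exact Finset.mem_erase.2 ⟨fun h => G.irrefl (h ▸ hv.2), hv.1⟩
  calc (S.filter (fun w => G.Adj u w)).card + 1 ≤ (S.erase u).card + 1 :=
        by exact Nat.add_le_add_right (Finset.card_le_card h) 1
    _ = S.card := Finset.card_erase_add_one hu

end Counting

section Eta
variable {V : Type} [Fintype V] [DecidableEq V] (G : SimpleGraph V) [DecidableRel G.Adj]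
  (S : Finset V) (x : V → ℝ) (ustar : V)

lemma eta_le (hpos : ∀ v, 0 < x v) (hmax : ∀ v, x v ≤ x ustar)
    (hdelta : ∀ u ∈ S, 2 ≤ (S.filter (fun w => G.Adj u w)).card) :
    etaVal G x ustar S ≤ (edgesIn G (S : Set V) : ℝ) - 2 * S.card := by
  have key : ∑ u ∈ S, (((S.filter (fun w => G.Adj u w)).card : ℝ) - 2) * x u / x ustar
      ≤ ∑ u ∈ S, (((S.filter (fun w => G.Adj u w)).card : ℝ) - 2) := by
    refine Finset.sum_le_sum fun u hu => ?_
    have h2 : (2 : ℝ) ≤ ((S.filter (fun w => G.Adj u w)).card : ℝ) := by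
      exact_mod_cast hdelta u hu
    have hc : 0 ≤ ((S.filter (fun w => G.Adj u w)).card : ℝ) - 2 := by linarith
    have hx : x u / x ustar ≤ 1 := div_le_one_of_le₀ (hmax u) (hpos ustar).le
    calc (((S.filter (fun w => G.Adj u w)).card : ℝ) - 2) * x u / x ustar
        = (((S.filter (fun w => G.Adj u w)).card : ℝ) - 2) * (x u / x ustar) := by ring
      _ ≤ (((S.filter (fun w => G.Adj u w)).card : ℝ) - 2) * 1 :=
          mul_le_mul_of_nonneg_left hx hc
      _ = ((S.filter (fun w => G.Adj u w)).card : ℝ) - 2 := by ring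
  have hsum : ∑ u ∈ S, (((S.filter (fun w => G.Adj u w)).card : ℝ) - 2)
      = 2 * (edgesIn G (S : Set V) : ℝ) - 2 * S.card := by
    rw [Finset.sum_sub_distrib, Finset.sum_const, nsmul_eq_mul]
    have h := handshake G S
    have h2 : ((∑ u ∈ S, (S.filter (fun w => G.Adj u w)).card : ℕ) : ℝ)
        = ((2 * edgesIn G (S : Set V) : ℕ) : ℝ) := by rw [h]
    push_cast at h2 ⊢
    rw [h2]
    ring
  rw [etaVal]
  linarith [key, hsum]

end Eta

section BLayer
variable {V : Type} [Fintype V] [DecidableEq V] (G : SimpleGraph V) [DecidableRel G.Adj]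
  (S : Finset V)

/-- missing-pairs finset -/
noncomputable def missing : Finset (Sym2 V) :=
  (S.sym2.filter (fun e => ¬ e.IsDiag)) \ (G.edgeFinset.filter (fun e => ∀ v ∈ e, v ∈ S))

lemma edges_subset_nd :
    G.edgeFinset.filter (fun e => ∀ v ∈ e, v ∈ S) ⊆ S.sym2.filter (fun e => ¬ e.IsDiag) := by
  intro e he
  simp only [Finset.mem_filter, SimpleGraph.mem_edgeFinset] at he ⊢
  exact ⟨Finset.mem_sym2_iff.2 he.2, SimpleGraph.not_isDiag_of_mem_edgeSet _ he.1⟩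

lemma nd_card : (S.sym2.filter (fun e => ¬ e.IsDiag)).card = S.card.choose 2 := by
  have h1 : (S.sym2.filter (fun e => e.IsDiag)).card = S.card := by
    refine Finset.card_nbij (fun a => Sym2.diag a) ?_ ?_ ?_ |>.symm
    · intro a ha
      simp only [Finset.mem_coe, Finset.mem_filter, Finset.diag_mem_sym2_iff]
      exact ⟨ha, Sym2.diag_isDiag a⟩
    · intro a _ b _ h
      exact Sym2.diag_injective h
    · intro e he
      simp only [Finset.coe_filter, Set.mem_setOf_eq, Finset.mem_coe] at he
      obtain ⟨x, y⟩ := e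
      obtain rfl : x = y := Sym2.mk_isDiag_iff.1 he.2
      have hx : x ∈ S := Finset.mem_sym2_iff.1 he.1 x (by simp)
      exact ⟨x, hx, rfl⟩
  have h2 := Finset.card_filter_add_card_filter_not (s := S.sym2)
    (p := fun e => e.IsDiag)
  rw [Finset.card_sym2] at h2
  rw [h1] at h2
  have h5 : (S.card + 1).choose 2 = S.card.choose 1 + S.card.choose 2 :=
    Nat.choose_succ_succ S.card 1
  rw [Nat.choose_one_right] at h5
  omega

lemma missing_card (h : edgesIn G (S : Set V) ≤ S.card.choose 2) :
    (missing G S).card = S.card.choose 2 - edgesIn G (S : Set V) := by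
  rw [missing, Finset.card_sdiff_of_subset (edges_subset_nd G S), nd_card, edgesIn_eq_card G S]

/-- adjacency characterization through the missing set -/
lemma adj_iff_not_missing {a b : V} (ha : a ∈ S) (hb : b ∈ S) :
    G.Adj a b ↔ a ≠ b ∧ s(a, b) ∉ missing G S := by
  constructor
  · intro h
    refine ⟨h.ne, ?_⟩
    intro hm
    rw [missing, Finset.mem_sdiff] at hm
    apply hm.2
    refine Finset.mem_filter.2 ⟨SimpleGraph.mem_edgeFinset.2 (G.mem_edgeSet.2 h), ?_⟩
    intro v hv
    rcases Sym2.mem_iff.1 hv with rfl | rfl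
    · exact ha
    · exact hb
  · rintro ⟨hne, hm⟩
    by_contra hadj
    apply hm
    rw [missing, Finset.mem_sdiff]
    constructor
    · exact Finset.mem_filter.2 ⟨Finset.mk_mem_sym2_iff.2 ⟨ha, hb⟩,
        by simp [Sym2.mk_isDiag_iff, hne]⟩
    · intro hmem
      exact hadj (G.mem_edgeSet.1
        (SimpleGraph.mem_edgeFinset.1 (Finset.mem_filter.1 hmem).1))

/-- transfer iso -/
lemma iso_delete {k : ℕ} (f : (↑S : Set V) ≃ Fin k) (M : Set (Sym2 (↑S : Set V)))
    (h : ∀ a b : (↑S : Set V), G.Adj ↑a ↑b ↔ a ≠ b ∧ s(a, b) ∉ M) :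
    Nonempty (G.induce (↑S : Set V) ≃g
      (⊤ : SimpleGraph (Fin k)).deleteEdges (Sym2.map f '' M)) := by
  refine ⟨⟨f, ?_⟩⟩
  intro a b
  rw [SimpleGraph.deleteEdges_adj, SimpleGraph.top_adj]
  have hc : (G.induce (↑S : Set V)).Adj a b ↔ G.Adj ↑a ↑b := Iff.rfl
  rw [hc, h a b]
  have hinj : Function.Injective (Sym2.map f) := Sym2.map.injective f.injective
  constructor
  · rintro ⟨hne, hnm⟩
    refine ⟨fun he => hne (congrArg f he), fun hm => hnm ⟨s(a, b), hm, rfl⟩⟩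
  · rintro ⟨hne, hnm⟩
    refine ⟨fun he => hne (f.injective he), ?_⟩
    rintro ⟨m, hm, hme⟩
    have hme' : m = s(a, b) := hinj (by rw [hme]; rfl)
    exact hnm (hme' ▸ hm)

noncomputable def M0 : Set (Sym2 (↑S : Set V)) :=
  {e | Sym2.map (Subtype.val : (↑S : Set V) → V) e ∈ missing G S}

lemma char_M0 : ∀ a b : (↑S : Set V), G.Adj ↑a ↑b ↔ a ≠ b ∧ s(a, b) ∉ M0 G S := by
  intro a b
  rw [adj_iff_not_missing G S a.2 b.2]
  have hmm : (s(a, b) ∈ M0 G S) ↔ s((a : V), (b : V)) ∈ missing G S := by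
    simp only [M0, Set.mem_setOf_eq, Sym2.map_pair_eq]
  constructor
  · rintro ⟨hne, hm⟩
    exact ⟨fun h => hne (congrArg _ h), fun h => hm (hmm.1 h)⟩
  · rintro ⟨hne, hm⟩
    exact ⟨fun h => hne (Subtype.ext h), fun h => hm (hmm.2 h)⟩

noncomputable def equivS {k : ℕ} (hcard : S.card = k) : (↑S : Set V) ≃ Fin k :=
  ((Equiv.subtypeEquivRight (fun x => Finset.mem_coe) : (↑S : Set V) ≃ {x // x ∈ S})).trans
    (Fintype.equivFinOfCardEq (by rw [Fintype.card_coe, hcard]))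

lemma missing_elim {w : Sym2 V} (hw : w ∈ missing G S) :
    ∃ a b : V, a ∈ S ∧ b ∈ S ∧ a ≠ b ∧ w = s(a, b) := by
  rw [missing, Finset.mem_sdiff, Finset.mem_filter] at hw
  obtain ⟨a, b⟩ := w
  refine ⟨a, b, ?_, ?_, ?_, rfl⟩
  · exact Finset.mk_mem_sym2_iff.1 hw.1.1 |>.1
  · exact Finset.mk_mem_sym2_iff.1 hw.1.1 |>.2
  · exact fun h => hw.1.2 (Sym2.mk_isDiag_iff.2 h)

lemma iso_complete {k : ℕ} (hcard : S.card = k)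
    (hmiss : missing G S = ∅) :
    Nonempty (G.induce (S : Set V) ≃g (⊤ : SimpleGraph (Fin k))) := by
  have hM0 : M0 G S = ∅ := by
    ext e; simp [M0, hmiss]
  obtain ⟨iso⟩ := iso_delete G S (equivS S hcard) (M0 G S) (char_M0 G S)
  rw [hM0, Set.image_empty, SimpleGraph.deleteEdges_empty] at iso
  exact ⟨iso⟩

lemma iso_K5e (hcard : S.card = 5) {p q : V} (hp : p ∈ S) (hq : q ∈ S) (hpq : p ≠ q)
    (hmiss : missing G S = {s(p, q)}) :
    Nonempty (G.induce (S : Set V) ≃g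
      (⊤ : SimpleGraph (Fin 5)).deleteEdges {s(3, 4)}) := by
  set pS : (↑S : Set V) := ⟨p, hp⟩
  set qS : (↑S : Set V) := ⟨q, hq⟩
  have hM0 : M0 G S = {s(pS, qS)} := by
    ext e
    obtain ⟨a, b⟩ := e
    simp only [M0, Set.mem_setOf_eq, hmiss, Finset.mem_singleton, Set.mem_singleton_iff,
      Sym2.map_pair_eq, Sym2.eq_iff]
    constructor
    · rintro (⟨h1, h2⟩ | ⟨h1, h2⟩)
      · exact Or.inl ⟨Subtype.ext h1, Subtype.ext h2⟩
      · exact Or.inr ⟨Subtype.ext h1, Subtype.ext h2⟩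
    · rintro (⟨rfl, rfl⟩ | ⟨rfl, rfl⟩)
      · exact Or.inl ⟨rfl, rfl⟩
      · exact Or.inr ⟨rfl, rfl⟩
  -- build f with f pS = 3, f qS = 4
  set f0 := equivS S hcard
  set g : (↑S : Set V) ≃ Fin 5 := f0.trans (Equiv.swap (f0 pS) 3)
  have hg : g pS = 3 := by simp [g]
  set f : (↑S : Set V) ≃ Fin 5 := g.trans (Equiv.swap (g qS) 4)
  have hgq : g qS ≠ 3 := by
    rw [← hg]
    exact fun h => hpq (congrArg Subtype.val (g.injective h)).symm
  have hfq : f qS = 4 := by simp [f]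
  have hfp : f pS = 3 := by
    simp only [f, Equiv.trans_apply, hg]
    rw [Equiv.swap_apply_of_ne_of_ne (fun h => hgq h.symm) (by decide)]
  obtain ⟨iso⟩ := iso_delete G S f (M0 G S) (char_M0 G S)
  rw [hM0, Set.image_singleton, Sym2.map_pair_eq, hfp, hfq] at iso
  exact ⟨iso⟩

lemma iso_K5m2e (hcard : S.card = 5) {w1 w2 : Sym2 V} (hw : w1 ≠ w2)
    (hmiss : missing G S = {w1, w2}) : IsK5Minus2e (G.induce (S : Set V)) := by
  obtain ⟨a1, b1, ha1, hb1, hab1, rfl⟩ :=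
    missing_elim G S (w := w1) (by rw [hmiss]; simp)
  obtain ⟨a2, b2, ha2, hb2, hab2, rfl⟩ :=
    missing_elim G S (w := w2) (by rw [hmiss]; simp)
  set m1 : Sym2 (↑S : Set V) := s(⟨a1, ha1⟩, ⟨b1, hb1⟩) with hm1
  set m2 : Sym2 (↑S : Set V) := s(⟨a2, ha2⟩, ⟨b2, hb2⟩) with hm2
  have hval1 : Sym2.map (Subtype.val : (↑S : Set V) → V) m1 = s(a1, b1) := by
    rw [hm1, Sym2.map_pair_eq]
  have hval2 : Sym2.map (Subtype.val : (↑S : Set V) → V) m2 = s(a2, b2) := by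
    rw [hm2, Sym2.map_pair_eq]
  have hinjval : Function.Injective (Sym2.map (Subtype.val : (↑S : Set V) → V)) :=
    Sym2.map.injective Subtype.val_injective
  have hM0 : M0 G S = {m1, m2} := by
    ext e
    simp only [M0, Set.mem_setOf_eq, hmiss, Finset.mem_insert, Finset.mem_singleton,
      Set.mem_insert_iff, Set.mem_singleton_iff]
    rw [← hval1, ← hval2]
    exact or_congr hinjval.eq_iff hinjval.eq_iff
  set f := equivS S hcard
  refine ⟨Sym2.map f m1, Sym2.map f m2, ?_, ?_, ?_, ?_⟩
  · rw [Sym2.isDiag_map f.injective, hm1, Sym2.mk_isDiag_iff]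
    exact fun h => hab1 (congrArg Subtype.val h)
  · rw [Sym2.isDiag_map f.injective, hm2, Sym2.mk_isDiag_iff]
    exact fun h => hab2 (congrArg Subtype.val h)
  · intro h
    exact hw (by rw [← hval1, ← hval2, Sym2.map.injective f.injective h])
  · obtain ⟨iso⟩ := iso_delete G S f (M0 G S) (char_M0 G S)
    rw [hM0, Set.image_insert_eq, Set.image_singleton] at iso
    exact ⟨iso⟩

lemma edgesIn_le_choose : edgesIn G (S : Set V) ≤ S.card.choose 2 := by
  rw [edgesIn_eq_card G S, ← nd_card S]
  exact Finset.card_le_card (edges_subset_nd G S)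

lemma class_complete {k : ℕ} (hcard : S.card = k) (he : edgesIn G (S : Set V) = k.choose 2) :
    Nonempty (G.induce (S : Set V) ≃g (⊤ : SimpleGraph (Fin k))) := by
  apply iso_complete G S hcard
  rw [← Finset.card_eq_zero, missing_card G S (by rw [he, hcard]), he, hcard, Nat.sub_self]

lemma class_K5e (hcard : S.card = 5) (he : edgesIn G (S : Set V) = 9) :
    Nonempty (G.induce (S : Set V) ≃g
      (⊤ : SimpleGraph (Fin 5)).deleteEdges {s(3, 4)}) := by
  have hm : (missing G S).card = 1 := by
    rw [missing_card G S (by rw [he, hcard]; decide), he, hcard]; decide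
  obtain ⟨w, hw⟩ := Finset.card_eq_one.1 hm
  obtain ⟨p, q, hp, hq, hpq, rfl⟩ := missing_elim G S (w := w) (by rw [hw]; simp)
  exact iso_K5e G S hcard hp hq hpq hw

lemma class_K5m2e (hcard : S.card = 5) (he : edgesIn G (S : Set V) = 8) :
    IsK5Minus2e (G.induce (S : Set V)) := by
  have hm : (missing G S).card = 2 := by
    rw [missing_card G S (by rw [he, hcard]; decide), he, hcard]; decide
  obtain ⟨w1, w2, hw, hws⟩ := Finset.card_eq_two.1 hm
  exact iso_K5m2e G S hcard hw hws

end BLayer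

section CLayer
variable {V : Type} [DecidableEq V] {G : SimpleGraph V} [DecidableRel G.Adj] {S : Finset V}

/-- the P6-free hypothesis, list form -/
def NoP6 (G : SimpleGraph V) (S : Finset V) : Prop :=
  ∀ l : List V, l.Chain' G.Adj → l.Nodup → (∀ v ∈ l, v ∈ S) → l.length ≤ 5

/-- connectivity, list form -/
def ConnLists (G : SimpleGraph V) (S : Finset V) : Prop :=
  ∀ a ∈ S, ∀ b ∈ S, ∃ l : List V, l.Chain' G.Adj ∧ l.Nodup ∧ (∀ v ∈ l, v ∈ S) ∧
    l.head? = some a ∧ l.getLast? = some b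

lemma p6 (hP6 : NoP6 G S) {v1 v2 v3 v4 v5 v6 : V}
    (m1 : v1 ∈ S) (m2 : v2 ∈ S) (m3 : v3 ∈ S) (m4 : v4 ∈ S) (m5 : v5 ∈ S) (m6 : v6 ∈ S)
    (a12 : G.Adj v1 v2) (a23 : G.Adj v2 v3) (a34 : G.Adj v3 v4) (a45 : G.Adj v4 v5)
    (a56 : G.Adj v5 v6)
    (d13 : v1 ≠ v3) (d14 : v1 ≠ v4) (d15 : v1 ≠ v5) (d16 : v1 ≠ v6)
    (d24 : v2 ≠ v4) (d25 : v2 ≠ v5) (d26 : v2 ≠ v6)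
    (d35 : v3 ≠ v5) (d36 : v3 ≠ v6) (d46 : v4 ≠ v6) : False := by
  have h := hP6 [v1, v2, v3, v4, v5, v6] ?_ ?_ ?_
  · simp at h
  · show List.IsChain _ _; simp only [List.isChain_cons_cons, List.isChain_singleton, and_true]
    exact ⟨a12, a23, a34, a45, a56⟩
  · simp only [List.nodup_cons, List.mem_cons, List.mem_singleton, List.not_mem_nil,
      not_or, List.nodup_nil, and_true, not_false_eq_true]
    exact ⟨⟨a12.ne, d13, d14, d15, d16⟩, ⟨a23.ne, d24, d25, d26⟩, ⟨a34.ne, d35, d36⟩,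
      ⟨a45.ne, d46⟩, a56.ne⟩
  · intro v hv
    simp only [List.mem_cons, List.mem_singleton, List.not_mem_nil, or_false] at hv
    rcases hv with rfl | rfl | rfl | rfl | rfl | rfl <;> assumption

lemma list_cross {A : Finset V} :
    ∀ (l : List V), l.Chain' G.Adj → (∀ v ∈ l, v ∈ S) →
      ∀ a b, l.head? = some a → l.getLast? = some b → a ∈ A → b ∉ A →
      ∃ u v, u ∈ S ∧ v ∈ S ∧ u ∈ A ∧ v ∉ A ∧ G.Adj u v := by
  intro l
  induction l with
  | nil => intro _ _ a b h; simp at h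
  | cons x t ih =>
    intro hch hm a b hh hl haA hbA
    rw [List.head?_cons, Option.some_inj] at hh
    subst hh
    match t with
    | [] =>
      rw [List.getLast?_singleton, Option.some_inj] at hl
      subst hl
      exact absurd haA hbA
    | y :: t' =>
      by_cases hy : y ∈ A
      · refine ih (List.IsChain.tail hch) (fun v hv => hm v (List.mem_cons_of_mem _ hv))
          y b rfl ?_ hy hbA
        · rw [← hl, List.getLast?_cons_cons]
      · exact ⟨x, y, hm x (by simp), hm y (by simp), haA, hy,
          (List.isChain_cons_cons.1 hch).1⟩

lemma cross (hconn : ConnLists G S) (A : Finset V) {a b : V} (ha : a ∈ S) (hb : b ∈ S)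
    (haA : a ∈ A) (hbA : b ∉ A) :
    ∃ u v, u ∈ S ∧ v ∈ S ∧ u ∈ A ∧ v ∉ A ∧ G.Adj u v := by
  obtain ⟨l, hch, _, hmem, hh, hl⟩ := hconn a ha b hb
  exact list_cross l hch hmem a b hh hl haA hbA

lemma exists_outside (hn6 : 6 ≤ S.card) {A : Finset V} (hA : A.card ≤ 5) :
    ∃ w ∈ S, w ∉ A := by
  by_contra h
  push_neg at h
  have := Finset.card_le_card h
  omega

lemma card5_le {a b c d e : V} : ({a, b, c, d, e} : Finset V).card ≤ 5 := by
  refine le_trans (Finset.card_insert_le _ _) ?_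
  refine le_trans (Nat.add_le_add_right (Finset.card_insert_le _ _) 1) ?_
  refine le_trans (Nat.add_le_add_right (Nat.add_le_add_right (Finset.card_insert_le _ _) 1) 1) ?_
  refine le_trans (Nat.add_le_add_right (Nat.add_le_add_right
    (Nat.add_le_add_right (Finset.card_insert_le _ _) 1) 1) 1) ?_
  simp

lemma noC5 (hP6 : NoP6 G S) (hconn : ConnLists G S) (hn6 : 6 ≤ S.card)
    {c1 c2 c3 c4 c5 : V}
    (m1 : c1 ∈ S) (m2 : c2 ∈ S) (m3 : c3 ∈ S) (m4 : c4 ∈ S) (m5 : c5 ∈ S)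
    (a12 : G.Adj c1 c2) (a23 : G.Adj c2 c3) (a34 : G.Adj c3 c4) (a45 : G.Adj c4 c5)
    (a51 : G.Adj c5 c1)
    (d13 : c1 ≠ c3) (d14 : c1 ≠ c4) (d24 : c2 ≠ c4) (d25 : c2 ≠ c5) (d35 : c3 ≠ c5) :
    False := by
  classical
  set A : Finset V := {c1, c2, c3, c4, c5} with hA
  obtain ⟨w, hwS, hwA⟩ := exists_outside hn6 (card5_le (a := c1))
  obtain ⟨u, v, huS, hvS, huA, hvA, hadj⟩ := cross hconn A m1 hwS (by simp [hA]) hwA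
  have hv1 : v ≠ c1 := fun h => hvA (by simp [hA, h])
  have hv2 : v ≠ c2 := fun h => hvA (by simp [hA, h])
  have hv3 : v ≠ c3 := fun h => hvA (by simp [hA, h])
  have hv4 : v ≠ c4 := fun h => hvA (by simp [hA, h])
  have hv5 : v ≠ c5 := fun h => hvA (by simp [hA, h])
  simp only [hA, Finset.mem_insert, Finset.mem_singleton] at huA
  rcases huA with rfl | rfl | rfl | rfl | rfl
  · exact p6 hP6 hvS m1 m2 m3 m4 m5 hadj.symm a12 a23 a34 a45
      hv2 hv3 hv4 hv5 d13 d14 (a51.ne') d24 d25 d35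
  · exact p6 hP6 hvS m2 m3 m4 m5 m1 hadj.symm a23 a34 a45 a51
      hv3 hv4 hv5 hv1 d24 d25 (a12.ne') d35 d13.symm d14.symm
  · exact p6 hP6 hvS m3 m4 m5 m1 m2 hadj.symm a34 a45 a51 a12
      hv4 hv5 hv1 hv2 d35 d13.symm (a23.ne') d14.symm d24.symm d25.symm
  · exact p6 hP6 hvS m4 m5 m1 m2 m3 hadj.symm a45 a51 a12 a23
      hv5 hv1 hv2 hv3 d14.symm d24.symm (a34.ne') d25.symm d35.symm d13
  · exact p6 hP6 hvS m5 m1 m2 m3 m4 hadj.symm a51 a12 a23 a34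
      hv1 hv2 hv3 hv4 d25.symm d35.symm (a45.ne') d13 d14 d24

lemma card4_le {a b c d : V} : ({a, b, c, d} : Finset V).card ≤ 4 := by
  refine le_trans (Finset.card_insert_le _ _) ?_
  refine le_trans (Nat.add_le_add_right (Finset.card_insert_le _ _) 1) ?_
  refine le_trans (Nat.add_le_add_right (Nat.add_le_add_right (Finset.card_insert_le _ _) 1) 1) ?_
  simp

lemma card2_le {a b : V} : ({a, b} : Finset V).card ≤ 2 := by
  refine le_trans (Finset.card_insert_le _ _) ?_
  simp

/-- Core of the C4 case, after normalising so that every outside vertex is adjacent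
to exactly `p0` and `p2`. -/
lemma caseC4_aux (hP6 : NoP6 G S) (hconn : ConnLists G S) (hn6 : 6 ≤ S.card)
    {p0 p1 p2 p3 : V}
    (m0 : p0 ∈ S) (m1 : p1 ∈ S) (m2 : p2 ∈ S) (m3 : p3 ∈ S)
    (d02 : p0 ≠ p2) (d13 : p1 ≠ p3)
    (a01 : G.Adj p0 p1) (a12 : G.Adj p1 p2) (a23 : G.Adj p2 p3) (a30 : G.Adj p3 p0)
    (hall : ∀ w ∈ S, w ≠ p0 → w ≠ p1 → w ≠ p2 → w ≠ p3 →
      G.Adj w p0 ∧ G.Adj w p2 ∧ ¬ G.Adj w p1 ∧ ¬ G.Adj w p3)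
    (hnoout : ∀ w ∈ S, ∀ z ∈ S, w ≠ p0 → w ≠ p1 → w ≠ p2 → w ≠ p3 →
      z ≠ p0 → z ≠ p1 → z ≠ p2 → z ≠ p3 → ¬ G.Adj w z) :
    ∃ a b, a ∈ S ∧ b ∈ S ∧ a ≠ b ∧ ∀ v ∈ S, v ≠ a → v ≠ b →
      (S.filter (fun w => G.Adj v w)).card ≤ 2 := by
  classical
  -- two distinct outside vertices
  obtain ⟨w1, hw1S, hw1A⟩ := exists_outside hn6
    (le_trans (card4_le (a := p0) (b := p1) (c := p2) (d := p3)) (by omega))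
  obtain ⟨w2, hw2S, hw2A⟩ := exists_outside hn6
    (card5_le (a := p0) (b := p1) (c := p2) (d := p3) (e := w1))
  have hw1n : w1 ≠ p0 ∧ w1 ≠ p1 ∧ w1 ≠ p2 ∧ w1 ≠ p3 := by
    refine ⟨?_, ?_, ?_, ?_⟩ <;> (intro h; exact hw1A (by simp [h]))
  have hw2n : w2 ≠ p0 ∧ w2 ≠ p1 ∧ w2 ≠ p2 ∧ w2 ≠ p3 ∧ w2 ≠ w1 := by
    refine ⟨?_, ?_, ?_, ?_, ?_⟩ <;> (intro h; exact hw2A (by simp [h]))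
  obtain ⟨hw10, hw11, hw12, hw13⟩ := hw1n
  obtain ⟨hw20, hw21, hw22, hw23, hw21'⟩ := hw2n
  have h1 := hall w1 hw1S hw10 hw11 hw12 hw13
  have h2 := hall w2 hw2S hw20 hw21 hw22 hw23
  -- no chord p1-p3
  have hch : ¬ G.Adj p1 p3 := by
    intro hc
    exact p6 hP6 hw1S m0 m1 m3 m2 hw2S
      h1.1 a01 hc a23.symm h2.2.1.symm
      hw11 hw13 hw12 hw21'.symm a30.ne' d02 hw20.symm a12.ne hw21.symm hw23.symm
  refine ⟨p0, p2, m0, m2, d02, ?_⟩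
  intro v hvS hv0 hv2
  have hsub : S.filter (fun w => G.Adj v w) ⊆ {p0, p2} := by
    intro z hz
    simp only [Finset.mem_filter] at hz
    obtain ⟨hzS, hadj⟩ := hz
    simp only [Finset.mem_insert, Finset.mem_singleton]
    by_contra hcon
    push_neg at hcon
    obtain ⟨hz0, hz2⟩ := hcon
    -- case analysis on v
    by_cases hv1 : v = p1
    · by_cases hz1 : z = p1
      · exact hadj.ne (hv1.trans hz1.symm)
      by_cases hz3 : z = p3
      · exact hch (by rw [← hv1, ← hz3]; exact hadj)
      · exact (hall z hzS hz0 hz1 hz2 hz3).2.2.1 (by rw [← hv1]; exact hadj.symm)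
    by_cases hv3 : v = p3
    · by_cases hz1 : z = p1
      · exact hch (by rw [← hv3, ← hz1]; exact hadj.symm)
      by_cases hz3 : z = p3
      · exact hadj.ne (hv3.trans hz3.symm)
      · exact (hall z hzS hz0 hz1 hz2 hz3).2.2.2 (by rw [← hv3]; exact hadj.symm)
    · have hv := hall v hvS hv0 hv1 hv2 hv3
      by_cases hz1 : z = p1
      · exact hv.2.2.1 (hz1 ▸ hadj)
      by_cases hz3 : z = p3
      · exact hv.2.2.2 (hz3 ▸ hadj)
      · exact hnoout v hvS z hzS hv0 hv1 hv2 hv3 hz0 hz1 hz2 hz3 hadj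
  exact le_trans (Finset.card_le_card hsub) card2_le

/-- The C4 case: if `S` contains a 4-cycle then there are two vertices such that all
others have degree at most 2 in `S`. -/
lemma caseC4 (hP6 : NoP6 G S) (hconn : ConnLists G S) (hn6 : 6 ≤ S.card)
    (hdelta : ∀ u ∈ S, 2 ≤ (S.filter (fun w => G.Adj u w)).card)
    {p0 p1 p2 p3 : V}
    (m0 : p0 ∈ S) (m1 : p1 ∈ S) (m2 : p2 ∈ S) (m3 : p3 ∈ S)
    (d02 : p0 ≠ p2) (d13 : p1 ≠ p3)
    (a01 : G.Adj p0 p1) (a12 : G.Adj p1 p2) (a23 : G.Adj p2 p3) (a30 : G.Adj p3 p0) :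
    ∃ a b, a ∈ S ∧ b ∈ S ∧ a ≠ b ∧ ∀ v ∈ S, v ≠ a → v ≠ b →
      (S.filter (fun w => G.Adj v w)).card ≤ 2 := by
  classical
  -- step 1 : every vertex of S is in the 4-cycle or adjacent to it
  have step1 : ∀ w ∈ S, w ∈ (insert p0 (insert p1 (insert p2 (insert p3
      (S.filter (fun v => G.Adj v p0 ∨ G.Adj v p1 ∨ G.Adj v p2 ∨ G.Adj v p3)))))) := by
    by_contra hcon
    push_neg at hcon
    obtain ⟨b, hbS, hbA⟩ := hcon
    obtain ⟨u, v, huS, hvS, huA, hvA, hadj⟩ := cross hconn _ m0 hbS (by simp) hbA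
    have hvn : v ≠ p0 ∧ v ≠ p1 ∧ v ≠ p2 ∧ v ≠ p3 := by
      refine ⟨?_, ?_, ?_, ?_⟩ <;> (intro h; exact hvA (by simp [h]))
    obtain ⟨hv0, hv1, hv2, hv3⟩ := hvn
    have hvadj : ¬ (G.Adj v p0 ∨ G.Adj v p1 ∨ G.Adj v p2 ∨ G.Adj v p3) := by
      intro h
      apply hvA
      simp only [Finset.mem_insert]
      exact Or.inr (Or.inr (Or.inr (Or.inr (Finset.mem_filter.2 ⟨hvS, h⟩))))
    push_neg at hvadj
    obtain ⟨hva0, hva1, hva2, hva3⟩ := hvadj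
    -- if u is a cycle vertex, then v is adjacent to the cycle: contradiction
    by_cases hu0 : u = p0
    · exact hva0 (by rw [← hu0]; exact hadj.symm)
    by_cases hu1 : u = p1
    · exact hva1 (by rw [← hu1]; exact hadj.symm)
    by_cases hu2 : u = p2
    · exact hva2 (by rw [← hu2]; exact hadj.symm)
    by_cases hu3 : u = p3
    · exact hva3 (by rw [← hu3]; exact hadj.symm)
    -- otherwise u is outside and adjacent to some cycle vertex
    simp only [Finset.mem_insert, hu0, hu1, hu2, hu3, false_or] at huA
    have huf := Finset.mem_filter.1 huA
    rcases huf.2 with h | h | h | h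
    · exact p6 hP6 hvS huS m0 m1 m2 m3 hadj.symm h a01 a12 a23
        hv0 hv1 hv2 hv3 hu1 hu2 hu3 d02 (a30.ne') d13
    · exact p6 hP6 hvS huS m1 m2 m3 m0 hadj.symm h a12 a23 a30
        hv1 hv2 hv3 hv0 hu2 hu3 hu0 d13 (a01.ne') d02.symm
    · exact p6 hP6 hvS huS m2 m3 m0 m1 hadj.symm h a23 a30 a01
        hv2 hv3 hv0 hv1 hu3 hu0 hu1 d02.symm (a12.ne') d13.symm
    · exact p6 hP6 hvS huS m3 m0 m1 m2 hadj.symm h a30 a01 a12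
        hv3 hv0 hv1 hv2 hu0 hu1 hu2 d13.symm (a23.ne') d02
  have adjC4 : ∀ w ∈ S, w ≠ p0 → w ≠ p1 → w ≠ p2 → w ≠ p3 →
      (G.Adj w p0 ∨ G.Adj w p1 ∨ G.Adj w p2 ∨ G.Adj w p3) := by
    intro w hwS hw0 hw1 hw2 hw3
    have := step1 w hwS
    simp only [Finset.mem_insert, hw0, hw1, hw2, hw3, false_or] at this
    exact (Finset.mem_filter.1 this).2
  -- step 2 : no edges between outside vertices
  have noout : ∀ w ∈ S, ∀ z ∈ S, w ≠ p0 → w ≠ p1 → w ≠ p2 → w ≠ p3 →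
      z ≠ p0 → z ≠ p1 → z ≠ p2 → z ≠ p3 → ¬ G.Adj w z := by
    intro w hwS z hzS hw0 hw1 hw2 hw3 hz0 hz1 hz2 hz3 hadj
    rcases adjC4 z hzS hz0 hz1 hz2 hz3 with h | h | h | h
    · exact p6 hP6 hwS hzS m0 m1 m2 m3 hadj h a01 a12 a23
        hw0 hw1 hw2 hw3 hz1 hz2 hz3 d02 (a30.ne') d13
    · exact p6 hP6 hwS hzS m1 m2 m3 m0 hadj h a12 a23 a30
        hw1 hw2 hw3 hw0 hz2 hz3 hz0 d13 (a01.ne') d02.symm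
    · exact p6 hP6 hwS hzS m2 m3 m0 m1 hadj h a23 a30 a01
        hw2 hw3 hw0 hw1 hz3 hz0 hz1 d02.symm (a12.ne') d13.symm
    · exact p6 hP6 hwS hzS m3 m0 m1 m2 hadj h a30 a01 a12
        hw3 hw0 hw1 hw2 hz0 hz1 hz2 d13.symm (a23.ne') d02
  -- step 3 : no outside vertex sees two consecutive cycle vertices
  have diag01 : ∀ w ∈ S, w ≠ p0 → w ≠ p1 → w ≠ p2 → w ≠ p3 →
      ¬ (G.Adj w p0 ∧ G.Adj w p1) := by
    rintro w hwS hw0 hw1 hw2 hw3 ⟨h0, h1⟩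
    exact noC5 hP6 hconn hn6 hwS m1 m2 m3 m0 h1 a12 a23 a30 h0.symm
      hw2 hw3 d13 (a01.ne') d02.symm
  have diag12 : ∀ w ∈ S, w ≠ p0 → w ≠ p1 → w ≠ p2 → w ≠ p3 →
      ¬ (G.Adj w p1 ∧ G.Adj w p2) := by
    rintro w hwS hw0 hw1 hw2 hw3 ⟨h1, h2⟩
    exact noC5 hP6 hconn hn6 hwS m2 m3 m0 m1 h2 a23 a30 a01 h1.symm
      hw3 hw0 d02.symm (a12.ne') d13.symm
  have diag23 : ∀ w ∈ S, w ≠ p0 → w ≠ p1 → w ≠ p2 → w ≠ p3 →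
      ¬ (G.Adj w p2 ∧ G.Adj w p3) := by
    rintro w hwS hw0 hw1 hw2 hw3 ⟨h2, h3⟩
    exact noC5 hP6 hconn hn6 hwS m3 m0 m1 m2 h3 a30 a01 a12 h2.symm
      hw0 hw1 d13.symm (a23.ne') d02
  have diag30 : ∀ w ∈ S, w ≠ p0 → w ≠ p1 → w ≠ p2 → w ≠ p3 →
      ¬ (G.Adj w p3 ∧ G.Adj w p0) := by
    rintro w hwS hw0 hw1 hw2 hw3 ⟨h3, h0⟩
    exact noC5 hP6 hconn hn6 hwS m0 m1 m2 m3 h0 a01 a12 a23 h3.symm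
      hw1 hw2 d02 (a30.ne') d13
  -- step 4 : every outside vertex has type {p0,p2} or type {p1,p3}
  have type4 : ∀ w ∈ S, w ≠ p0 → w ≠ p1 → w ≠ p2 → w ≠ p3 →
      (G.Adj w p0 ∧ G.Adj w p2 ∧ ¬ G.Adj w p1 ∧ ¬ G.Adj w p3) ∨
      (G.Adj w p1 ∧ G.Adj w p3 ∧ ¬ G.Adj w p0 ∧ ¬ G.Adj w p2) := by
    intro w hwS hw0 hw1 hw2 hw3
    have hcard := hdelta w hwS
    have hcard2 : 1 < (S.filter (fun z => G.Adj w z)).card := by omega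
    obtain ⟨z1, hz1, z2, hz2, hz12⟩ := Finset.one_lt_card.1 hcard2
    simp only [Finset.mem_filter] at hz1 hz2
    have hloc : ∀ z, z ∈ S → G.Adj w z → z = p0 ∨ z = p1 ∨ z = p2 ∨ z = p3 := by
      intro z hzS hadj
      by_contra hcz
      push_neg at hcz
      obtain ⟨hz0', hz1', hz2', hz3'⟩ := hcz
      exact noout w hwS z hzS hw0 hw1 hw2 hw3 hz0' hz1' hz2' hz3' hadj
    have key : (G.Adj w p0 ∧ G.Adj w p2) ∨ (G.Adj w p1 ∧ G.Adj w p3) := by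
      rcases hloc z1 hz1.1 hz1.2 with rfl | rfl | rfl | rfl <;>
        rcases hloc z2 hz2.1 hz2.2 with rfl | rfl | rfl | rfl
      · exact absurd rfl hz12
      · exact absurd ⟨hz1.2, hz2.2⟩ (diag01 w hwS hw0 hw1 hw2 hw3)
      · exact Or.inl ⟨hz1.2, hz2.2⟩
      · exact absurd ⟨hz2.2, hz1.2⟩ (diag30 w hwS hw0 hw1 hw2 hw3)
      · exact absurd ⟨hz2.2, hz1.2⟩ (diag01 w hwS hw0 hw1 hw2 hw3)
      · exact absurd rfl hz12
      · exact absurd ⟨hz1.2, hz2.2⟩ (diag12 w hwS hw0 hw1 hw2 hw3)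
      · exact Or.inr ⟨hz1.2, hz2.2⟩
      · exact Or.inl ⟨hz2.2, hz1.2⟩
      · exact absurd ⟨hz2.2, hz1.2⟩ (diag12 w hwS hw0 hw1 hw2 hw3)
      · exact absurd rfl hz12
      · exact absurd ⟨hz1.2, hz2.2⟩ (diag23 w hwS hw0 hw1 hw2 hw3)
      · exact absurd ⟨hz1.2, hz2.2⟩ (diag30 w hwS hw0 hw1 hw2 hw3)
      · exact Or.inr ⟨hz2.2, hz1.2⟩
      · exact absurd ⟨hz2.2, hz1.2⟩ (diag23 w hwS hw0 hw1 hw2 hw3)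
      · exact absurd rfl hz12
    rcases key with ⟨h0, h2⟩ | ⟨h1, h3⟩
    · exact Or.inl ⟨h0, h2, fun h => diag01 w hwS hw0 hw1 hw2 hw3 ⟨h0, h⟩,
        fun h => diag30 w hwS hw0 hw1 hw2 hw3 ⟨h, h0⟩⟩
    · exact Or.inr ⟨h1, h3, fun h => diag01 w hwS hw0 hw1 hw2 hw3 ⟨h, h1⟩,
        fun h => diag12 w hwS hw0 hw1 hw2 hw3 ⟨h1, h⟩⟩
  -- step 5 : all outside vertices have the same type
  by_cases hex : ∃ w' ∈ S, w' ≠ p0 ∧ w' ≠ p1 ∧ w' ≠ p2 ∧ w' ≠ p3 ∧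
      G.Adj w' p1 ∧ G.Adj w' p3
  · -- all are of type {p1,p3}; apply aux to the rotated cycle
    obtain ⟨w', hw'S, hw'0, hw'1, hw'2, hw'3, hb1, hb3⟩ := hex
    have hall : ∀ w ∈ S, w ≠ p1 → w ≠ p2 → w ≠ p3 → w ≠ p0 →
        G.Adj w p1 ∧ G.Adj w p3 ∧ ¬ G.Adj w p2 ∧ ¬ G.Adj w p0 := by
      intro w hwS hw1 hw2 hw3 hw0
      rcases type4 w hwS hw0 hw1 hw2 hw3 with ⟨h0, h2, hn1, hn3⟩ | ⟨h1, h3, hn0, hn2⟩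
      · -- type {p0,p2} vertex together with w' gives a P6
        exfalso
        have hww' : w ≠ w' := by
          intro h
          exact hn1 (h ▸ hb1)
        exact p6 hP6 hwS m0 m1 hw'S m3 m2
          h0 a01 hb1.symm hb3 a23.symm
          hw1 hww' hw3 hw2 hw'0.symm a30.ne' d02 d13 a12.ne hw'2
      · exact ⟨h1, h3, hn2, hn0⟩
    exact caseC4_aux hP6 hconn hn6 m1 m2 m3 m0 d13 d02.symm a12 a23 a30 a01 hall
      (fun w hwS z hzS hw1 hw2 hw3 hw0 hz1 hz2 hz3 hz0 =>
        noout w hwS z hzS hw0 hw1 hw2 hw3 hz0 hz1 hz2 hz3)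
  · -- all are of type {p0,p2}
    push_neg at hex
    have hall : ∀ w ∈ S, w ≠ p0 → w ≠ p1 → w ≠ p2 → w ≠ p3 →
        G.Adj w p0 ∧ G.Adj w p2 ∧ ¬ G.Adj w p1 ∧ ¬ G.Adj w p3 := by
      intro w hwS hw0 hw1 hw2 hw3
      rcases type4 w hwS hw0 hw1 hw2 hw3 with h | ⟨h1, h3, _, _⟩
      · exact h
      · exact absurd h3 (hex w hwS hw0 hw1 hw2 hw3 h1)
    exact caseC4_aux hP6 hconn hn6 m0 m1 m2 m3 d02 d13 a01 a12 a23 a30 hall noout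

lemma firstQ {Q : V → Prop} [DecidablePred Q] :
    ∀ (t : List V) (b : V), t.getLast? = some b → Q b →
      ∃ m z, (m ++ [z]) <+: t ∧ (∀ x ∈ m, ¬ Q x) ∧ Q z := by
  intro t
  induction t with
  | nil => intro b h; simp at h
  | cons c t' ih =>
    intro b hb hQb
    by_cases hc : Q c
    · exact ⟨[], c, ⟨t', rfl⟩, by simp, hc⟩
    · match t' with
      | [] =>
        rw [List.getLast?_singleton, Option.some_inj] at hb
        exact absurd (hb ▸ hQb) hc
      | d :: t'' =>
        rw [List.getLast?_cons_cons] at hb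
        obtain ⟨m, z, hpre, hm, hz⟩ := ih b hb hQb
        refine ⟨c :: m, z, ?_, ?_, hz⟩
        · obtain ⟨r, hr⟩ := hpre
          exact ⟨r, by simp [hr]⟩
        · intro x hx
          rcases List.mem_cons.1 hx with rfl | hx
          · exact hc
          · exact hm x hx

lemma seg_lemma {P Q : V → Prop} [DecidablePred P] [DecidablePred Q]
    (hdisj : ∀ x, P x → ¬ Q x) :
    ∀ (l : List V), l.Chain' G.Adj → l.Nodup → (∀ v ∈ l, v ∈ S) →
      (∃ x ∈ l, P x) → ∀ b, l.getLast? = some b → Q b →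
      ∃ a mid z, P a ∧ Q z ∧ (∀ x ∈ mid, ¬ P x ∧ ¬ Q x) ∧
        (a :: mid ++ [z]).Chain' G.Adj ∧ (a :: mid ++ [z]).Nodup ∧
        (∀ v ∈ a :: mid ++ [z], v ∈ S) := by
  intro l
  induction l with
  | nil => rintro _ _ _ ⟨x, hx, _⟩; simp at hx
  | cons h t ih =>
    intro hch hnd hm hex b hb hQb
    by_cases hPt : ∃ x ∈ t, P x
    · match t with
      | [] => obtain ⟨x, hx, _⟩ := hPt; simp at hx
      | d :: t'' =>
        rw [List.getLast?_cons_cons] at hb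
        exact ih hch.tail (hnd.of_cons)
          (fun v hv => hm v (List.mem_cons_of_mem _ hv)) hPt b hb hQb
    · have hPh : P h := by
        obtain ⟨x, hx, hPx⟩ := hex
        rcases List.mem_cons.1 hx with rfl | hx
        · exact hPx
        · exact absurd ⟨x, hx, hPx⟩ hPt
      match t with
      | [] =>
        rw [List.getLast?_singleton, Option.some_inj] at hb
        exact absurd (hb ▸ hQb) (hdisj h hPh)
      | d :: t'' =>
        rw [List.getLast?_cons_cons] at hb
        obtain ⟨m, z, hpre, hmQ, hQz⟩ := firstQ (d :: t'') b hb hQb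
        have hsub : (h :: (m ++ [z])) <+: (h :: d :: t'') := by
          obtain ⟨r, hr⟩ := hpre
          exact ⟨r, by simp [hr]⟩
        refine ⟨h, m, z, hPh, hQz, ?_, hch.prefix hsub, hnd.sublist hsub.sublist,
          fun v hv => hm v (hsub.sublist.mem hv)⟩
        intro x hx
        have hxt : x ∈ d :: t'' := hpre.sublist.mem (by simp [hx])
        exact ⟨fun hPx => hPt ⟨x, hxt, hPx⟩, hmQ x hx⟩

/-- two vertex-disjoint triangles inside `S` are impossible -/
lemma tri_meet (hP6 : NoP6 G S) (hconn : ConnLists G S)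
    {a1 a2 a3 b1 b2 b3 : V}
    (ma1 : a1 ∈ S) (ma2 : a2 ∈ S) (ma3 : a3 ∈ S)
    (mb1 : b1 ∈ S) (mb2 : b2 ∈ S) (mb3 : b3 ∈ S)
    (ha12 : G.Adj a1 a2) (ha13 : G.Adj a1 a3) (ha23 : G.Adj a2 a3)
    (hb12 : G.Adj b1 b2) (hb13 : G.Adj b1 b3) (hb23 : G.Adj b2 b3)
    (h11 : a1 ≠ b1) (h12 : a1 ≠ b2) (h13 : a1 ≠ b3)
    (h21 : a2 ≠ b1) (h22 : a2 ≠ b2) (h23 : a2 ≠ b3)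
    (h31 : a3 ≠ b1) (h32 : a3 ≠ b2) (h33 : a3 ≠ b3) : False := by
  classical
  set P : V → Prop := fun x => x = a1 ∨ x = a2 ∨ x = a3 with hP
  set Q : V → Prop := fun x => x = b1 ∨ x = b2 ∨ x = b3 with hQ
  have hdisj : ∀ x, P x → ¬ Q x := by
    rintro x (rfl | rfl | rfl) (rfl | rfl | rfl) <;> simp_all
  obtain ⟨l, hch, hnd, hm, hh, hl⟩ := hconn a1 ma1 b1 mb1
  obtain ⟨a, mid, z, hPa, hQz, hmid, hch', hnd', hm'⟩ :=
    seg_lemma hdisj l hch hnd hm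
      ⟨a1, List.mem_of_mem_head? (hh ▸ rfl), Or.inl rfl⟩ b1 hl (Or.inl rfl)
  -- the other two vertices of each triangle
  obtain ⟨x, y, hxS, hyS, hxy, hya, hPx, hPy, hxny, hxna, hyna⟩ :
      ∃ x y, x ∈ S ∧ y ∈ S ∧ G.Adj x y ∧ G.Adj y a ∧ P x ∧ P y ∧ x ≠ y ∧ x ≠ a ∧ y ≠ a := by
    rcases hPa with rfl | rfl | rfl
    · exact ⟨a2, a3, ma2, ma3, ha23, ha13.symm, Or.inr (Or.inl rfl), Or.inr (Or.inr rfl),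
        ha23.ne, ha12.ne', ha13.ne'⟩
    · exact ⟨a1, a3, ma1, ma3, ha13, ha23.symm, Or.inl rfl, Or.inr (Or.inr rfl),
        ha13.ne, ha12.ne, ha23.ne'⟩
    · exact ⟨a1, a2, ma1, ma2, ha12, ha23, Or.inl rfl, Or.inr (Or.inl rfl),
        ha12.ne, ha13.ne, ha23.ne⟩
  obtain ⟨u, v, huS, hvS, hzu, huv, hQu, hQv, hunv, hunz, hvnz⟩ :
      ∃ u v, u ∈ S ∧ v ∈ S ∧ G.Adj z u ∧ G.Adj u v ∧ Q u ∧ Q v ∧ u ≠ v ∧ u ≠ z ∧ v ≠ z := by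
    rcases hQz with rfl | rfl | rfl
    · exact ⟨b2, b3, mb2, mb3, hb12, hb23, Or.inr (Or.inl rfl), Or.inr (Or.inr rfl),
        hb23.ne, hb12.ne', hb13.ne'⟩
    · exact ⟨b1, b3, mb1, mb3, hb12.symm, hb13, Or.inl rfl, Or.inr (Or.inr rfl),
        hb13.ne, hb12.ne, hb23.ne'⟩
    · exact ⟨b1, b2, mb1, mb2, hb13.symm, hb12, Or.inl rfl, Or.inr (Or.inl rfl),
        hb12.ne, hb13.ne, hb23.ne⟩
  -- assemble the long list
  have hPS : ∀ w, P w → w ∈ S := by rintro w (rfl | rfl | rfl) <;> assumption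
  have hQS : ∀ w, Q w → w ∈ S := by rintro w (rfl | rfl | rfl) <;> assumption
  set L : List V := x :: y :: ((a :: mid ++ [z]) ++ [u, v]) with hL
  have hchL : L.Chain' G.Adj := by
    rw [hL]; show List.IsChain _ _; rw [List.isChain_cons]
    constructor
    · intro w hw
      simp only [List.head?_cons, Option.mem_def, Option.some_inj] at hw
      exact hw ▸ hxy
    rw [List.isChain_cons]
    constructor
    · intro w hw
      simp only [List.cons_append, List.head?_cons, Option.mem_def, Option.some_inj] at hw
      exact hw ▸ hya
    rw [List.isChain_append]
    refine ⟨hch', by simp [huv], ?_⟩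
    intro w hw w' hw'
    rw [List.getLast?_concat] at hw
    simp only [Option.mem_def, Option.some_inj, List.head?_cons] at hw hw'
    rw [← hw, ← hw']
    exact hzu
  have hmemI2 : ∀ w, w ∈ (a :: mid ++ [z]) ↔ (w = a ∨ w ∈ mid ∨ w = z) := by
    intro w
    simp [List.mem_append, List.mem_cons, or_assoc]
  have hmemI : ∀ w, w ∈ ((a :: mid ++ [z]) ++ [u, v]) ↔
      (w = a ∨ w ∈ mid ∨ w = z ∨ w = u ∨ w = v) := by
    intro w
    simp [List.mem_append, List.mem_cons, or_assoc]
  have hndL : L.Nodup := by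
    have hPnot : ∀ w, P w → w ∉ ((a :: mid ++ [z]) ++ [u, v]) ∨ w = a := by
      intro w hPw
      by_cases hwa : w = a
      · exact Or.inr hwa
      left
      intro hw
      rcases (hmemI w).1 hw with rfl | hw | rfl | rfl | rfl
      · exact hwa rfl
      · exact (hmid w hw).1 hPw
      · exact hdisj w hPw hQz
      · exact hdisj w hPw hQu
      · exact hdisj w hPw hQv
    have hxmem : x ∉ (a :: mid ++ [z]) ++ [u, v] := by
      rcases hPnot x hPx with h | h
      · exact h
      · exact absurd h hxna
    have hymem : y ∉ (a :: mid ++ [z]) ++ [u, v] := by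
      rcases hPnot y hPy with h | h
      · exact h
      · exact absurd h hyna
    have hrest : ((a :: mid ++ [z]) ++ [u, v]).Nodup := by
      rw [List.nodup_append]
      refine ⟨hnd', by simp [hunv], ?_⟩
      intro w hw w' hw' hww'; subst hww'
      simp only [List.mem_cons, List.mem_singleton, List.not_mem_nil, or_false] at hw'
      rcases (hmemI2 w).1 hw with rfl | hw2 | rfl
      · rcases hw' with rfl | rfl
        · exact hdisj w hPa hQu
        · exact hdisj w hPa hQv
      · rcases hw' with rfl | rfl
        · exact (hmid w hw2).2 hQu
        · exact (hmid w hw2).2 hQv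
      · rcases hw' with rfl | rfl
        · exact hunz rfl
        · exact hvnz rfl
    rw [hL]
    refine List.nodup_cons.2 ⟨?_, List.nodup_cons.2 ⟨hymem, hrest⟩⟩
    simp only [List.mem_cons]
    push_neg
    exact ⟨hxny, hxmem⟩
  have hmL : ∀ w ∈ L, w ∈ S := by
    intro w hw
    rw [hL] at hw
    rcases List.mem_cons.1 hw with rfl | hw
    · exact hxS
    rcases List.mem_cons.1 hw with rfl | hw
    · exact hyS
    rcases (hmemI w).1 hw with rfl | hw | rfl | rfl | rfl
    · exact hPS w hPa
    · exact hm' w (by simp [hmemI2, hw])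
    · exact hQS w hQz
    · exact huS
    · exact hvS
  have hlen := hP6 L hchL hndL hmL
  rw [hL] at hlen
  simp only [List.length_cons, List.length_append, List.length_cons, List.length_nil] at hlen
  omega

def NoC4 (G : SimpleGraph V) (S : Finset V) : Prop :=
  ∀ ⦃q0 q1 q2 q3 : V⦄, q0 ∈ S → q1 ∈ S → q2 ∈ S → q3 ∈ S → q0 ≠ q2 → q1 ≠ q3 →
    G.Adj q0 q1 → G.Adj q1 q2 → G.Adj q2 q3 → G.Adj q3 q0 → False

lemma exists_nbr_ne {u e : V}
    (h : 2 ≤ (S.filter (fun w => G.Adj u w)).card) :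
    ∃ z ∈ S, G.Adj u z ∧ z ≠ e := by
  have h1 : 1 < (S.filter (fun w => G.Adj u w)).card := by omega
  obtain ⟨z, hz, hze⟩ := Finset.exists_mem_ne h1 e
  rw [Finset.mem_filter] at hz
  exact ⟨z, hz.1, hz.2, hze⟩

lemma exists_nbr_ne2 {u e1 e2 : V}
    (h : 3 ≤ (S.filter (fun w => G.Adj u w)).card) :
    ∃ z ∈ S, G.Adj u z ∧ z ≠ e1 ∧ z ≠ e2 := by
  have hsd := Finset.le_card_sdiff ({e1, e2} : Finset V) (S.filter (fun w => G.Adj u w))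
  have h2 : 0 < ((S.filter (fun w => G.Adj u w)) \ {e1, e2}).card := by
    have := card2_le (a := e1) (b := e2) (V := V)
    omega
  obtain ⟨z, hz⟩ := Finset.card_pos.1 h2
  rw [Finset.mem_sdiff, Finset.mem_filter] at hz
  simp only [Finset.mem_insert, Finset.mem_singleton, not_or] at hz
  exact ⟨z, hz.1.1, hz.1.2, hz.2.1, hz.2.2⟩

/-- every edge inside `S` lies in a triangle -/
lemma edge_tri (hP6 : NoP6 G S) (hconn : ConnLists G S) (hn6 : 6 ≤ S.card)
    (hdelta : ∀ u ∈ S, 2 ≤ (S.filter (fun w => G.Adj u w)).card)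
    (hno4 : NoC4 G S)
    {u v : V} (huS : u ∈ S) (hvS : v ∈ S) (huv : G.Adj u v) :
    ∃ w ∈ S, G.Adj u w ∧ G.Adj v w := by
  by_contra hcon
  push_neg at hcon
  obtain ⟨u', hu'S, huu', hu'v⟩ := exists_nbr_ne (e := v) (hdelta u huS)
  have hvu' : ¬ G.Adj v u' := hcon u' hu'S huu'
  obtain ⟨v', hv'S, hvv', hv'u⟩ := exists_nbr_ne (e := u) (hdelta v hvS)
  have huv' : ¬ G.Adj u v' := fun h => hcon v' hv'S h hvv'
  have hu'v' : u' ≠ v' := by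
    intro h
    exact hvu' (h ▸ hvv')
  obtain ⟨u'', hu''S, hu'u'', hu''u⟩ := exists_nbr_ne (e := u) (hdelta u' hu'S)
  have hu''v : u'' ≠ v := by
    intro h
    exact hvu' (h ▸ hu'u'').symm
  have hu''v' : u'' ≠ v' := by
    intro h
    exact hno4 huS hvS hv'S hu'S hv'u.symm hu'v.symm
      huv hvv' (h ▸ hu'u'').symm huu'.symm
  obtain ⟨v'', hv''S, hv'v'', hv''v⟩ := exists_nbr_ne (e := v) (hdelta v' hv'S)
  have hv''u : v'' ≠ u := by
    intro h
    exact huv' (h ▸ hv'v'').symm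
  have hv''u' : v'' ≠ u' := by
    intro h
    exact hno4 huS hvS hv'S hu'S hv'u.symm hu'v.symm huv hvv' (h ▸ hv'v'') huu'.symm
  have hv''u'' : v'' ≠ u'' := by
    intro h
    exact noC5 hP6 hconn hn6 huS hu'S hu''S hv'S hvS
      huu' hu'u'' (h ▸ hv'v'').symm hvv'.symm huv.symm
      hu''u.symm hv'u.symm hu'v' hu'v hu''v
  exact p6 hP6 hu''S hu'S huS hvS hv'S hv''S
    hu'u''.symm huu'.symm huv hvv' hv'v''
    hu''u hu''v hu''v' hv''u''.symm
    hu'v hu'v' hv''u'.symm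
    hv'u.symm hv''u.symm hv''v.symm

/-- if `u,a,b` is a triangle and `u` has another neighbour `c`, then the only
neighbours of `a` in `S` are `u` and `b`. -/
lemma nbr_clean (hP6 : NoP6 G S) (hconn : ConnLists G S) (hn6 : 6 ≤ S.card)
    (hdelta : ∀ u ∈ S, 2 ≤ (S.filter (fun w => G.Adj u w)).card)
    (hno4 : NoC4 G S)
    {u a b c : V} (huS : u ∈ S) (haS : a ∈ S) (hbS : b ∈ S) (hcS : c ∈ S)
    (hua : G.Adj u a) (hub : G.Adj u b) (hab : G.Adj a b) (huc : G.Adj u c)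
    (hca : c ≠ a) (hcb : c ≠ b) :
    ∀ z ∈ S, G.Adj z a → z = u ∨ z = b := by
  have hac : ¬ G.Adj a c := by
    intro h
    exact hno4 hcS huS hbS haS hcb hua.ne huc.symm hub hab.symm h
  have hbc : ¬ G.Adj b c := by
    intro h
    exact hno4 haS hbS hcS huS hca.symm hub.ne' hab h huc.symm hua
  intro z hzS hza
  by_contra hcon
  push_neg at hcon
  obtain ⟨hzu, hzb⟩ := hcon
  have hzc : z ≠ c := by
    intro h
    exact hac (h ▸ hza).symm
  by_cases hadj : G.Adj z u
  · exact hno4 hzS huS hbS haS hzb hua.ne hadj hub hab.symm hza.symm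
  -- common neighbour of u and c
  obtain ⟨c', hc'S, huc', hcc'⟩ := edge_tri hP6 hconn hn6 hdelta hno4 huS hcS huc
  have hc'a : c' ≠ a := by
    intro h
    apply hac
    rw [← h]
    exact hcc'.symm
  have hc'b : c' ≠ b := by
    intro h
    apply hbc
    rw [← h]
    exact hcc'.symm
  have hc'z : c' ≠ z := by
    intro h
    exact hadj (h ▸ huc').symm
  exact p6 hP6 hzS haS hbS huS hcS hc'S
    hza hab hub.symm huc hcc'
    hzb hzu hzc hc'z.symm hua.ne' hca.symm (fun h => hc'a h.symm)
    hcb.symm (fun h => hc'b h.symm) huc'.ne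

/-- at most one vertex of `S` has degree ≥ 3 inside `S` (triangle case) -/
lemma deg3_unique (hP6 : NoP6 G S) (hconn : ConnLists G S) (hn6 : 6 ≤ S.card)
    (hdelta : ∀ u ∈ S, 2 ≤ (S.filter (fun w => G.Adj u w)).card)
    (hno4 : NoC4 G S)
    {u v : V} (huS : u ∈ S) (hvS : v ∈ S) (huv : u ≠ v)
    (hdu : 3 ≤ (S.filter (fun w => G.Adj u w)).card)
    (hdv : 3 ≤ (S.filter (fun w => G.Adj v w)).card) : False := by
  by_cases hadj : G.Adj u v
  · -- adjacent case
    obtain ⟨w, hwS, huw, hvw⟩ := edge_tri hP6 hconn hn6 hdelta hno4 huS hvS hadj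
    have hwu : ∀ w' ∈ S, G.Adj u w' → G.Adj v w' → w' = w := by
      intro w' hw'S h1 h2
      by_contra hne
      exact hno4 hwS huS hw'S hvS (fun h => hne h.symm) huv huw.symm h1 h2.symm hvw
    obtain ⟨x, hxS, hux, hxv, hxw⟩ := exists_nbr_ne2 (e1 := v) (e2 := w) hdu
    obtain ⟨x', hx'S, hux', hxx'⟩ := edge_tri hP6 hconn hn6 hdelta hno4 huS hxS hux
    have hx'v : x' ≠ v := by
      intro h
      exact hxw (hwu x hxS hux (by rw [← h]; exact hxx'.symm))
    have hx'w : x' ≠ w := by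
      intro h
      exact hno4 hxS hwS hvS huS hxv (huw.ne') (h ▸ hxx') hvw.symm hadj.symm hux
    have cleanx := nbr_clean hP6 hconn hn6 hdelta hno4 huS hxS hx'S hvS
      hux hux' hxx' hadj (fun h => hxv h.symm) (fun h => hx'v h.symm)
    have cleanx' := nbr_clean hP6 hconn hn6 hdelta hno4 huS hx'S hxS hvS
      hux' hux hxx'.symm hadj (fun h => hx'v h.symm) (fun h => hxv h.symm)
    obtain ⟨y, hyS, hvy, hyu, hyw⟩ := exists_nbr_ne2 (e1 := u) (e2 := w) hdv
    obtain ⟨y', hy'S, hvy', hyy'⟩ := edge_tri hP6 hconn hn6 hdelta hno4 hvS hyS hvy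
    have hy'u : y' ≠ u := by
      intro h
      exact hyw (hwu y hyS (by rw [← h]; exact hyy'.symm) hvy)
    have hy'w : y' ≠ w := by
      intro h
      exact hno4 hyS hwS huS hvS hyu hvw.ne' (h ▸ hyy') huw.symm hadj hvy
    -- disjointness of the two triangles
    have hxy : x ≠ y := by
      intro h
      rcases cleanx v hvS (by rw [h]; exact hvy) with h' | h'
      · exact huv h'.symm
      · exact hx'v h'.symm
    have hxy' : x ≠ y' := by
      intro h
      rcases cleanx v hvS (by rw [h]; exact hvy') with h' | h'
      · exact huv h'.symm
      · exact hx'v h'.symm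
    have hx'y : x' ≠ y := by
      intro h
      rcases cleanx' v hvS (by rw [h]; exact hvy) with h' | h'
      · exact huv h'.symm
      · exact hxv h'.symm
    have hx'y' : x' ≠ y' := by
      intro h
      rcases cleanx' v hvS (by rw [h]; exact hvy') with h' | h'
      · exact huv h'.symm
      · exact hxv h'.symm
    exact tri_meet hP6 hconn huS hxS hx'S hvS hyS hy'S
      hux hux' hxx' hvy hvy' hyy'
      huv (fun h => hyu h.symm) (fun h => hy'u h.symm)
      hxv hxy hxy' hx'v hx'y hx'y'
  · -- non-adjacent case
    obtain ⟨x, hxS, hux, hxv⟩ := exists_nbr_ne (u := u) (e := v) (le_trans (by norm_num) hdu)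
    obtain ⟨x', hx'S, hux', hxx'⟩ := edge_tri hP6 hconn hn6 hdelta hno4 huS hxS hux
    have hx'v : x' ≠ v := by
      intro h
      exact hadj (h ▸ hux')
    obtain ⟨c, hcS, huc, hcx, hcx'⟩ := exists_nbr_ne2 (e1 := x) (e2 := x') hdu
    have cleanx := nbr_clean hP6 hconn hn6 hdelta hno4 huS hxS hx'S hcS
      hux hux' hxx' huc hcx hcx'
    have cleanx' := nbr_clean hP6 hconn hn6 hdelta hno4 huS hx'S hxS hcS
      hux' hux hxx'.symm huc hcx' hcx
    obtain ⟨y, hyS, hvy, hyu⟩ := exists_nbr_ne (u := v) (e := u) (le_trans (by norm_num) hdv)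
    obtain ⟨y', hy'S, hvy', hyy'⟩ := edge_tri hP6 hconn hn6 hdelta hno4 hvS hyS hvy
    have hy'u : y' ≠ u := by
      intro h
      exact hadj (h ▸ hvy').symm
    have hxy : x ≠ y := by
      intro h
      rcases cleanx v hvS (by rw [h]; exact hvy) with h' | h'
      · exact huv h'.symm
      · exact hx'v h'.symm
    have hxy' : x ≠ y' := by
      intro h
      rcases cleanx v hvS (by rw [h]; exact hvy') with h' | h'
      · exact huv h'.symm
      · exact hx'v h'.symm
    have hx'y : x' ≠ y := by
      intro h
      rcases cleanx' v hvS (by rw [h]; exact hvy) with h' | h'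
      · exact huv h'.symm
      · exact hxv h'.symm
    have hx'y' : x' ≠ y' := by
      intro h
      rcases cleanx' v hvS (by rw [h]; exact hvy') with h' | h'
      · exact huv h'.symm
      · exact hxv h'.symm
    exact tri_meet hP6 hconn huS hxS hx'S hvS hyS hy'S
      hux hux' hxx' hvy hvy' hyy'
      huv (fun h => hyu h.symm) (fun h => hy'u h.symm)
      hxv hxy hxy' hx'v hx'y hx'y'

lemma caseTri (hP6 : NoP6 G S) (hconn : ConnLists G S) (hn6 : 6 ≤ S.card)
    (hdelta : ∀ u ∈ S, 2 ≤ (S.filter (fun w => G.Adj u w)).card)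
    (hno4 : NoC4 G S) :
    ∃ c ∈ S, ∀ v ∈ S, v ≠ c → (S.filter (fun w => G.Adj v w)).card ≤ 2 := by
  by_cases hex : ∃ u ∈ S, 3 ≤ (S.filter (fun w => G.Adj u w)).card
  · obtain ⟨u, huS, hdu⟩ := hex
    refine ⟨u, huS, ?_⟩
    intro w hwS hwu
    by_contra h
    exact deg3_unique hP6 hconn hn6 hdelta hno4 huS hwS (fun h' => hwu h'.symm)
      hdu (by omega)
  · push_neg at hex
    obtain ⟨c, hc⟩ := Finset.card_pos.1 (by omega : 0 < S.card)
    exact ⟨c, hc, fun v hv _ => by have := hex v hv; omega⟩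

lemma deg_lt_card' {u : V} (hu : u ∈ S) :
    (S.filter (fun w => G.Adj u w)).card + 1 ≤ S.card := by
  have h : S.filter (fun w => G.Adj u w) ⊆ S.erase u := by
    intro v hv
    simp only [Finset.mem_filter] at hv
    exact Finset.mem_erase.2 ⟨fun h => G.irrefl (h ▸ hv.2), hv.1⟩
  calc (S.filter (fun w => G.Adj u w)).card + 1 ≤ (S.erase u).card + 1 :=
        Nat.add_le_add_right (Finset.card_le_card h) 1
    _ = S.card := Finset.card_erase_add_one hu

lemma sum_bound2 {a b : V} (ha : a ∈ S) (hb : b ∈ S) (hab : a ≠ b)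
    (h : ∀ v ∈ S, v ≠ a → v ≠ b → (S.filter (fun w => G.Adj v w)).card ≤ 2) :
    ∑ u ∈ S, (S.filter (fun w => G.Adj u w)).card + 6 ≤ 4 * S.card := by
  have hb' : b ∈ S.erase a := Finset.mem_erase.2 ⟨fun h' => hab h'.symm, hb⟩
  have e1 : (S.erase a).card + 1 = S.card := Finset.card_erase_add_one ha
  have e2 : ((S.erase a).erase b).card + 1 = (S.erase a).card :=
    Finset.card_erase_add_one hb'
  have hs1 := Finset.sum_erase_add S (fun u => (S.filter (fun w => G.Adj u w)).card) ha
  have hs2 := Finset.sum_erase_add (S.erase a)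
    (fun u => (S.filter (fun w => G.Adj u w)).card) hb'
  have htail : ∑ u ∈ (S.erase a).erase b, (S.filter (fun w => G.Adj u w)).card
      ≤ ((S.erase a).erase b).card * 2 := by
    rw [← smul_eq_mul]
    refine Finset.sum_le_card_nsmul _ _ 2 ?_
    intro x hx
    rw [Finset.mem_erase] at hx
    obtain ⟨hxb, hx'⟩ := hx
    rw [Finset.mem_erase] at hx'
    exact h x hx'.2 hx'.1 hxb
  have hda := deg_lt_card' (G := G) ha
  have hdb := deg_lt_card' (G := G) hb
  omega

lemma sum_bound1 {c : V} (hc : c ∈ S) (hn3 : 3 ≤ S.card)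
    (h : ∀ v ∈ S, v ≠ c → (S.filter (fun w => G.Adj v w)).card ≤ 2) :
    ∑ u ∈ S, (S.filter (fun w => G.Adj u w)).card + 6 ≤ 4 * S.card := by
  have e1 : (S.erase c).card + 1 = S.card := Finset.card_erase_add_one hc
  have hs1 := Finset.sum_erase_add S (fun u => (S.filter (fun w => G.Adj u w)).card) hc
  have htail : ∑ u ∈ S.erase c, (S.filter (fun w => G.Adj u w)).card
      ≤ (S.erase c).card * 2 := by
    rw [← smul_eq_mul]
    refine Finset.sum_le_card_nsmul _ _ 2 ?_
    intro x hx
    rw [Finset.mem_erase] at hx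
    exact h x hx.2 hx.1
  have hdc := deg_lt_card' (G := G) hc
  omega

/-- the main degree-sum bound for `|S| ≥ 6` -/
lemma core6 (hP6 : NoP6 G S) (hconn : ConnLists G S) (hn6 : 6 ≤ S.card)
    (hdelta : ∀ u ∈ S, 2 ≤ (S.filter (fun w => G.Adj u w)).card) :
    ∑ u ∈ S, (S.filter (fun w => G.Adj u w)).card + 6 ≤ 4 * S.card := by
  by_cases hc4 : ∃ p0 p1 p2 p3 : V, (p0 ∈ S ∧ p1 ∈ S ∧ p2 ∈ S ∧ p3 ∈ S) ∧
      (p0 ≠ p2 ∧ p1 ≠ p3) ∧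
      (G.Adj p0 p1 ∧ G.Adj p1 p2 ∧ G.Adj p2 p3 ∧ G.Adj p3 p0)
  · obtain ⟨p0, p1, p2, p3, ⟨m0, m1, m2, m3⟩, ⟨d02, d13⟩, ⟨a01, a12, a23, a30⟩⟩ := hc4
    obtain ⟨a, b, haS, hbS, hab, hdeg⟩ :=
      caseC4 hP6 hconn hn6 hdelta m0 m1 m2 m3 d02 d13 a01 a12 a23 a30
    exact sum_bound2 haS hbS hab hdeg
  · have hno4 : NoC4 G S := by
      intro q0 q1 q2 q3 h0 h1 h2 h3 hq02 hq13 b01 b12 b23 b30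
      exact hc4 ⟨q0, q1, q2, q3, ⟨h0, h1, h2, h3⟩, ⟨hq02, hq13⟩, ⟨b01, b12, b23, b30⟩⟩
    obtain ⟨c, hcS, hdeg⟩ := caseTri hP6 hconn hn6 hdelta hno4
    exact sum_bound1 hcS (by omega) hdeg

end CLayer

section Transfer
variable {V : Type} [DecidableEq V] {G : SimpleGraph V} {S : Finset V}

lemma walk_getLast {V' : Type*} {G' : SimpleGraph V'} {u v : V'} (q : G'.Walk u v) :
    q.support.getLast? = some v := by
  induction q with
  | nil => simp
  | @cons a b c h q ih =>
    rw [SimpleGraph.Walk.support_cons, q.support_eq_cons, List.getLast?_cons_cons,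
      ← q.support_eq_cons, ih]

lemma connLists_of (hSconn : (G.induce (S : Set V)).Connected) : ConnLists G S := by
  intro a ha b hb
  obtain ⟨w⟩ := hSconn.preconnected ⟨a, Finset.mem_coe.2 ha⟩ ⟨b, Finset.mem_coe.2 hb⟩
  set p := w.toPath with hp
  refine ⟨p.1.support.map Subtype.val, ?_, ?_, ?_, ?_, ?_⟩
  · show List.IsChain _ _; rw [List.isChain_map]
    exact p.1.isChain_adj_support
  · exact List.Nodup.map Subtype.val_injective p.2.support_nodup
  · intro v hv
    obtain ⟨x, hx, rfl⟩ := List.mem_map.1 hv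
    exact Finset.mem_coe.1 x.2
  · rw [p.1.support_eq_cons, List.map_cons, List.head?_cons]
  · rw [List.getLast?_map, walk_getLast]
    rfl

lemma noP6_of {ustar : V}
    (hP6free : ¬ ContainsSub (SimpleGraph.pathGraph 6) (G.induce (G.neighborSet ustar)))
    (hSnbr : ∀ v ∈ S, G.Adj ustar v) : NoP6 G S := by
  intro l hch hnd hm
  by_contra hlen
  push_neg at hlen
  set l6 := l.take 6 with hl6
  have hlen6 : l6.length = 6 := by rw [hl6, List.length_take]; omega
  have hch6 : l6.Chain' G.Adj := hch.take 6
  have hnd6 : l6.Nodup := hnd.sublist (List.take_sublist 6 l)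
  have hm6 : ∀ v ∈ l6, v ∈ S := fun v hv => hm v (List.take_subset 6 l hv)
  apply hP6free
  have hidx : ∀ i : Fin 6, i.1 < l6.length := by
    intro i; omega
  refine ⟨fun i => ⟨l6.get ⟨i.1, hidx i⟩, ?_⟩, ?_, ?_⟩
  · exact hSnbr _ (hm6 _ (l6.get_mem ⟨i.1, hidx i⟩))
  · intro i j hij
    have h1 : l6.get ⟨i.1, hidx i⟩ = l6.get ⟨j.1, hidx j⟩ := congrArg Subtype.val hij
    have h2 := (hnd6.get_inj_iff).1 h1
    have h3 := congrArg Fin.val h2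
    exact Fin.ext h3
  · intro i j hij
    rw [SimpleGraph.pathGraph_adj] at hij
    have hget := List.isChain_iff_getElem.1 hch6
    show G.Adj (l6.get ⟨i.1, hidx i⟩) (l6.get ⟨j.1, hidx j⟩)
    rcases hij with hij | hij
    · have h := hget i.1 (by omega)
      have : (⟨i.1 + 1, by omega⟩ : Fin l6.length) = ⟨j.1, hidx j⟩ := by
        exact Fin.ext (by simp [hij])
      simp only [List.get_eq_getElem, ← hij]; exact h
    · have h := hget j.1 (by omega)
      have : (⟨j.1 + 1, by omega⟩ : Fin l6.length) = ⟨i.1, hidx i⟩ := by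
        exact Fin.ext (by simp [hij])
      simp only [List.get_eq_getElem, ← hij]; exact h.symm

end Transfer

/-- Bounds on `η(H)` for a non-trivial component `H = G[S]` of `G[N(u*)]`
with minimum degree at least 2, when `G[N(u*)]` is `P₆`-free. -/
theorem eta_bounds_min_degree_ge_two {V : Type} [Fintype V] [DecidableEq V]
    (G : SimpleGraph V) [DecidableRel G.Adj] (hconn : G.Connected)
    (x : V → ℝ) (hpos : ∀ v, 0 < x v) (heig : G.adjMatrix ℝ *ᵥ x = specRad G • x)
    (ustar : V) (hmax : ∀ v, x v ≤ x ustar)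
    (hP6free : ¬ ContainsSub (SimpleGraph.pathGraph 6) (G.induce (G.neighborSet ustar)))
    (S : Finset V)
    (hSnbr : ∀ v ∈ S, G.Adj ustar v)
    (hSconn : (G.induce (S : Set V)).Connected)
    (hSclosed : ∀ a ∈ S, ∀ b, G.Adj ustar b → G.Adj a b → b ∈ S)
    (hScard : 2 ≤ S.card)
    (hdelta : ∀ u ∈ S, 2 ≤ (S.filter (fun w => G.Adj u w)).card) :
    etaVal G x ustar S ≤ 0 ∧
    (¬ Nonempty (G.induce (S : Set V) ≃g (⊤ : SimpleGraph (Fin 5))) →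
      etaVal G x ustar S ≤ -1) ∧
    (¬ Nonempty (G.induce (S : Set V) ≃g (⊤ : SimpleGraph (Fin 5))) ∧
      ¬ Nonempty (G.induce (S : Set V) ≃g
          (⊤ : SimpleGraph (Fin 5)).deleteEdges {s(3, 4)}) →
      etaVal G x ustar S ≤ -2) ∧
    (¬ Nonempty (G.induce (S : Set V) ≃g (⊤ : SimpleGraph (Fin 5))) ∧
      ¬ Nonempty (G.induce (S : Set V) ≃g
          (⊤ : SimpleGraph (Fin 5)).deleteEdges {s(3, 4)}) ∧
      ¬ Nonempty (G.induce (S : Set V) ≃g (⊤ : SimpleGraph (Fin 4))) ∧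
      ¬ IsK5Minus2e (G.induce (S : Set V)) →
      etaVal G x ustar S ≤ -3) := by
  classical
  have hP6 : NoP6 G S := noP6_of hP6free hSnbr
  have hcl : ConnLists G S := connLists_of hSconn
  have hhs := handshake G S
  have hn3 : 3 ≤ S.card := by
    obtain ⟨u, hu⟩ := Finset.card_pos.1 (by omega : 0 < S.card)
    have h1 := hdelta u hu
    have h2 := deg_lt_card G S hu
    omega
  have hub : edgesIn G (S : Set V) ≤ S.card.choose 2 := edgesIn_le_choose G S
  have h6 : 6 ≤ S.card → edgesIn G (S : Set V) + 3 ≤ 2 * S.card := by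
    intro h
    have hcore := core6 hP6 hcl h hdelta
    rw [hhs] at hcore
    omega
  have heta := eta_le G S x ustar hpos hmax hdelta
  have hcases : S.card = 3 ∨ S.card = 4 ∨ S.card = 5 ∨ 6 ≤ S.card := by omega
  have hc3 : (3 : ℕ).choose 2 = 3 := by decide
  have hc4 : (4 : ℕ).choose 2 = 6 := by decide
  have hc5 : (5 : ℕ).choose 2 = 10 := by decide
  have conclude : ∀ k : ℕ, edgesIn G (S : Set V) + k ≤ 2 * S.card →
      etaVal G x ustar S ≤ -(k : ℝ) := by
    intro k hk
    have hkr : (edgesIn G (S : Set V) : ℝ) + k ≤ 2 * S.card := by exact_mod_cast hk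
    linarith
  refine ⟨?_, ?_, ?_, ?_⟩
  · -- η ≤ 0
    have hk : edgesIn G (S : Set V) + 0 ≤ 2 * S.card := by
      rcases hcases with h | h | h | h
      · rw [h, hc3] at hub; rw [h]; omega
      · rw [h, hc4] at hub; rw [h]; omega
      · rw [h, hc5] at hub; rw [h]; omega
      · have := h6 h; omega
    simpa using conclude 0 hk
  · -- η ≤ -1 if not K5
    intro hK5
    have hk : edgesIn G (S : Set V) + 1 ≤ 2 * S.card := by
      rcases hcases with h | h | h | h
      · rw [h, hc3] at hub; rw [h]; omega
      · rw [h, hc4] at hub; rw [h]; omega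
      · rw [h, hc5] at hub
        have hne : edgesIn G (S : Set V) ≠ 10 := by
          intro he
          exact hK5 (class_complete G S h (by rw [he, hc5]))
        rw [h]; omega
      · have := h6 h; omega
    simpa using conclude 1 hk
  · -- η ≤ -2 if neither K5 nor K5 - e
    rintro ⟨hK5, hK5e⟩
    have hk : edgesIn G (S : Set V) + 2 ≤ 2 * S.card := by
      rcases hcases with h | h | h | h
      · rw [h, hc3] at hub; rw [h]; omega
      · rw [h, hc4] at hub; rw [h]; omega
      · rw [h, hc5] at hub
        have hne : edgesIn G (S : Set V) ≠ 10 := by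
          intro he
          exact hK5 (class_complete G S h (by rw [he, hc5]))
        have hne9 : edgesIn G (S : Set V) ≠ 9 := by
          intro he
          exact hK5e (class_K5e G S h he)
        rw [h]; omega
      · have := h6 h; omega
    simpa using conclude 2 hk
  · -- η ≤ -3 in the remaining cases
    rintro ⟨hK5, hK5e, hK4, h2e⟩
    have hk : edgesIn G (S : Set V) + 3 ≤ 2 * S.card := by
      rcases hcases with h | h | h | h
      · rw [h, hc3] at hub; rw [h]; omega
      · rw [h, hc4] at hub
        have hne : edgesIn G (S : Set V) ≠ 6 := by
          intro he
          exact hK4 (class_complete G S h (by rw [he, hc4]))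
        rw [h]; omega
      · rw [h, hc5] at hub
        have hne : edgesIn G (S : Set V) ≠ 10 := by
          intro he
          exact hK5 (class_complete G S h (by rw [he, hc5]))
        have hne9 : edgesIn G (S : Set V) ≠ 9 := by
          intro he
          exact hK5e (class_K5e G S h he)
        have hne8 : edgesIn G (S : Set V) ≠ 8 := by
          intro he
          exact h2e (class_K5m2e G S h he)
        rw [h]; omega
      · exact h6 h
    simpa using conclude 3 hk
end

section
/- Let G be a connected finite simple graph, x a Perron vector of G, and u* a vertex at which x attains its maximum. Suppose the induced subgraph G[N(u*)] contains no path on 6 vertices as a subgraph. Let H be a connected component of G[N(u*)] with at least 6 vertices and minimum degree δ(H) ≥ 2. If η(H) = −3, then H is isomorphic to K_2 ∨ (|V(H)| − 2)K_1 (two adjacent vertices each joined to |V(H)| − 2 independent vertices). -/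
open Matrix Finset

set_option linter.unusedSectionVars false
set_option linter.unusedVariables false

namespace EtaAux


variable {α : Type} [Fintype α] [DecidableEq α] {H : SimpleGraph α}

lemma p6_of_chain (a b c d e f : α)
    (n1 : a ≠ b) (n2 : a ≠ c) (n3 : a ≠ d) (n4 : a ≠ e) (n5 : a ≠ f)
    (n6 : b ≠ c) (n7 : b ≠ d) (n8 : b ≠ e) (n9 : b ≠ f)
    (n10 : c ≠ d) (n11 : c ≠ e) (n12 : c ≠ f)
    (n13 : d ≠ e) (n14 : d ≠ f) (n15 : e ≠ f)
    (h1 : H.Adj a b) (h2 : H.Adj b c) (h3 : H.Adj c d) (h4 : H.Adj d e) (h5 : H.Adj e f) :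
    ContainsSub (SimpleGraph.pathGraph 6) H := by
  have e0 : ![a,b,c,d,e,f] 0 = a := rfl
  have e1 : ![a,b,c,d,e,f] 1 = b := rfl
  have e2 : ![a,b,c,d,e,f] 2 = c := rfl
  have e3 : ![a,b,c,d,e,f] 3 = d := rfl
  have e4 : ![a,b,c,d,e,f] 4 = e := rfl
  have e5 : ![a,b,c,d,e,f] 5 = f := rfl
  refine ⟨![a,b,c,d,e,f], ?_, ?_⟩
  · intro i j hij
    fin_cases i <;> fin_cases j <;> simp_all [e0,e1,e2,e3,e4,e5]
  · intro i j hij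
    rw [SimpleGraph.pathGraph_adj] at hij
    fin_cases i <;> fin_cases j <;>
      simp_all [e0,e1,e2,e3,e4,e5, SimpleGraph.adj_comm]

lemma crossing_aux (P : α → Prop) : ∀ {u v : α}, H.Walk u v → P u → ¬ P v →
    ∃ s t, P s ∧ ¬ P t ∧ H.Adj s t := by
  intro u v w
  induction w with
  | nil => intro h h'; exact absurd h h'
  | @cons u' v' r h w ih =>
    intro hu hv
    by_cases hm : P v'
    · exact ih hm hv
    · exact ⟨u', v', hu, hm, h⟩

lemma crossing (hconn : H.Connected) (P : α → Prop) {p q : α} (hp : P p) (hq : ¬ P q) :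
    ∃ s t, P s ∧ ¬ P t ∧ H.Adj s t := by
  obtain ⟨w⟩ := hconn.preconnected p q
  exact crossing_aux P w hp hq

lemma exists_notin5 (hcard : 6 ≤ Fintype.card α) (a b c d e : α) :
    ∃ u, u ≠ a ∧ u ≠ b ∧ u ≠ c ∧ u ≠ d ∧ u ≠ e := by
  by_contra hcon
  push_neg at hcon
  have hsub : (Finset.univ : Finset α) ⊆ {a, b, c, d, e} := by
    intro u _
    simp only [Finset.mem_insert, Finset.mem_singleton]
    by_contra hmem
    push_neg at hmem
    obtain ⟨h1, h2, h3, h4, h5⟩ := hmem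
    exact h5 (hcon u h1 h2 h3 h4)
  have hle := Finset.card_le_card hsub
  have i1 := Finset.card_insert_le a ({b,c,d,e} : Finset α)
  have i2 := Finset.card_insert_le b ({c,d,e} : Finset α)
  have i3 := Finset.card_insert_le c ({d,e} : Finset α)
  have i4 := Finset.card_insert_le d ({e} : Finset α)
  have i5 : ({e} : Finset α).card = 1 := Finset.card_singleton e
  rw [Finset.card_univ] at hle
  omega

lemma deg_le_two [DecidableRel H.Adj] {v p q : α} (h : ∀ t, H.Adj v t → t = p ∨ t = q) :
    H.degree v ≤ 2 := by
  have hsub : H.neighborFinset v ⊆ {p, q} := by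
    intro t ht
    rw [SimpleGraph.mem_neighborFinset] at ht
    rcases h t ht with h|h <;> simp [h]
  have i1 := Finset.card_insert_le p ({q} : Finset α)
  have i2 : ({q} : Finset α).card = 1 := Finset.card_singleton q
  have := Finset.card_le_card hsub
  rw [SimpleGraph.degree]
  omega

lemma two_nbrs [DecidableRel H.Adj] {v : α} (h : 2 ≤ H.degree v) :
    ∃ w w', w ≠ w' ∧ H.Adj v w ∧ H.Adj v w' := by
  rw [SimpleGraph.degree] at h
  have hlt : 1 < (H.neighborFinset v).card := by omega
  obtain ⟨w, hw, w', hw', hne⟩ := Finset.one_lt_card.mp hlt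
  rw [SimpleGraph.mem_neighborFinset] at hw hw'
  exact ⟨w, w', hne, hw, hw'⟩

end EtaAux

namespace EtaAux
variable {α : Type} [Fintype α] [DecidableEq α] {H : SimpleGraph α}

lemma exists_chain5 [DecidableRel H.Adj] (hconn : H.Connected)
    (htwo : ∀ v : α, 2 ≤ H.degree v) (hcard : 6 ≤ Fintype.card α) :
    ∃ a b c d e : α,
      (a ≠ b ∧ a ≠ c ∧ a ≠ d ∧ a ≠ e ∧ b ≠ c ∧ b ≠ d ∧ b ≠ e ∧ c ≠ d ∧ c ≠ e ∧ d ≠ e)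
      ∧ H.Adj a b ∧ H.Adj b c ∧ H.Adj c d ∧ H.Adj d e := by
  by_contra h5
  have no5 : ∀ a b c d e : α, a ≠ b → a ≠ c → a ≠ d → a ≠ e → b ≠ c → b ≠ d → b ≠ e →
      c ≠ d → c ≠ e → d ≠ e → H.Adj a b → H.Adj b c → H.Adj c d → H.Adj d e → False := by
    intro a b c d e h1 h2 h3 h4 h5' h6 h7 h8 h9 h10 a1 a2 a3 a4
    exact h5 ⟨a, b, c, d, e, ⟨h1,h2,h3,h4,h5',h6,h7,h8,h9,h10⟩, a1, a2, a3, a4⟩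
  obtain ⟨v⟩ : Nonempty α := Fintype.card_pos_iff.mp (by omega)
  by_cases h4 : ∃ a b c d : α, (a ≠ b ∧ a ≠ c ∧ a ≠ d ∧ b ≠ c ∧ b ≠ d ∧ c ≠ d)
      ∧ H.Adj a b ∧ H.Adj b c ∧ H.Adj c d
  · obtain ⟨p, q, r, s, ⟨d1,d2,d3,d4,d5,d6⟩, a1, a2, a3⟩ := h4
    have closure4 : ∀ p1 p2 p3 p4 : α, p1 ≠ p2 → p1 ≠ p3 → p1 ≠ p4 → p2 ≠ p3 → p2 ≠ p4 →
        p3 ≠ p4 → H.Adj p1 p2 → H.Adj p2 p3 → H.Adj p3 p4 →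
        ∀ t, H.Adj t p1 → t = p2 ∨ t = p3 ∨ t = p4 := by
      intro p1 p2 p3 p4 e1 e2 e3 e4 e5 e6 b1 b2 b3 t ht
      by_contra hc
      push_neg at hc
      obtain ⟨c1, c2, c3⟩ := hc
      exact no5 t p1 p2 p3 p4 ht.ne c1 c2 c3 e1 e2 e3 e4 e5 e6 ht b1 b2 b3
    have clp : ∀ t, H.Adj t p → t = q ∨ t = r ∨ t = s :=
      closure4 p q r s d1 d2 d3 d4 d5 d6 a1 a2 a3
    have cls : ∀ t, H.Adj t s → t = r ∨ t = q ∨ t = p :=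
      closure4 s r q p d6.symm d5.symm d3.symm d4.symm d2.symm d1.symm a3.symm a2.symm a1.symm
    have hprs : H.Adj p r ∨ H.Adj p s := by
      obtain ⟨n1, n2, hnn, hp1, hp2⟩ := two_nbrs (htwo p)
      rcases clp n1 hp1.symm with rfl|rfl|rfl
      · rcases clp n2 hp2.symm with rfl|rfl|rfl
        · exact absurd rfl hnn
        · exact Or.inl hp2
        · exact Or.inr hp2
      · exact Or.inl hp1
      · exact Or.inr hp1
    obtain ⟨u, hu1, hu2, hu3, hu4, _⟩ := exists_notin5 hcard p q r s s
    have hunotin : ¬ (u = p ∨ u = q ∨ u = r ∨ u = s) := by tauto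
    obtain ⟨s1, t1, hPs, hPt, hadj⟩ :=
      crossing hconn (fun x => x = p ∨ x = q ∨ x = r ∨ x = s) (Or.inl rfl) hunotin
    have hsym : ∀ z, s1 = z → H.Adj t1 z := fun z h => (h ▸ hadj).symm
    by_cases hps : H.Adj p s
    · rcases hPs with h|h|h|h
      · have := clp t1 (hsym p h)
        exact hPt (by tauto)
      · have := closure4 q p s r d1.symm d5 d4 d3 d2 d6.symm a1.symm hps a3.symm t1 (hsym q h)
        exact hPt (by tauto)
      · have := closure4 r s p q d6 d2.symm d4.symm d3.symm d5.symm d1 a3 hps.symm a1 t1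
          (hsym r h)
        exact hPt (by tauto)
      · have := closure4 s r q p d6.symm d5.symm d3.symm d4.symm d2.symm d1.symm a3.symm
          a2.symm a1.symm t1 (hsym s h)
        exact hPt (by tauto)
    · have hpr : H.Adj p r := by tauto
      have hsq : H.Adj s q := by
        obtain ⟨n1, n2, hnn, hs1, hs2⟩ := two_nbrs (htwo s)
        have hnsp : ∀ t, H.Adj s t → t ≠ p := by
          intro t h1 h2
          subst h2
          exact hps h1.symm
        rcases cls n1 hs1.symm with rfl|rfl|rfl
        · rcases cls n2 hs2.symm with rfl|rfl|rfl
          · exact absurd rfl hnn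
          · exact hs2
          · exact absurd rfl (hnsp _ hs2)
        · exact hs1
        · exact absurd rfl (hnsp _ hs1)
      rcases hPs with h|h|h|h
      · have := clp t1 (hsym p h)
        exact hPt (by tauto)
      · have := closure4 q p r s d1.symm d4 d5 d2 d3 d6 a1.symm hpr a3 t1 (hsym q h)
        exact hPt (by tauto)
      · have := closure4 r p q s d2.symm d4.symm d6 d1 d3 d5 hpr.symm a1 hsq.symm t1 (hsym r h)
        exact hPt (by tauto)
      · have := closure4 s q p r d5.symm d3.symm d6.symm d1.symm d4 d2 hsq a1.symm hpr t1
          (hsym s h)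
        exact hPt (by tauto)
  · have no4 : ∀ a b c d : α, a ≠ b → a ≠ c → a ≠ d → b ≠ c → b ≠ d → c ≠ d →
        H.Adj a b → H.Adj b c → H.Adj c d → False := by
      intro a b c d h1 h2 h3 h4' h5' h6 a1 a2 a3
      exact h4 ⟨a, b, c, d, ⟨h1,h2,h3,h4',h5',h6⟩, a1, a2, a3⟩
    have closure3 : ∀ p1 p2 p3 : α, p1 ≠ p2 → p1 ≠ p3 → p2 ≠ p3 →
        H.Adj p1 p2 → H.Adj p2 p3 → ∀ t, H.Adj t p1 → t = p2 ∨ t = p3 := by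
      intro p1 p2 p3 e1 e2 e3 b1 b2 t ht
      by_contra hc
      push_neg at hc
      exact no4 t p1 p2 p3 ht.ne hc.1 hc.2 e1 e2 e3 ht b1 b2
    obtain ⟨w, w2, hne2, hvw, hvw2⟩ := two_nbrs (htwo v)
    have hww2 : H.Adj w w2 := by
      obtain ⟨n1, n2, hnn, h1, h2⟩ := two_nbrs (htwo w)
      have cl := closure3 w v w2 hvw.ne' hne2 hvw2.ne hvw.symm hvw2
      rcases cl n1 h1.symm with rfl|rfl
      · rcases cl n2 h2.symm with rfl|rfl
        · exact absurd rfl hnn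
        · exact h2
      · exact h1
    obtain ⟨u, hu1, hu2, hu3, _, _⟩ := exists_notin5 hcard w v w2 w2 w2
    have hunotin : ¬ (u = w ∨ u = v ∨ u = w2) := by tauto
    obtain ⟨s1, t1, hPs, hPt, hadj⟩ :=
      crossing hconn (fun x => x = w ∨ x = v ∨ x = w2) (Or.inl rfl) hunotin
    have hsym : ∀ z, s1 = z → H.Adj t1 z := fun z h => (h ▸ hadj).symm
    rcases hPs with h|h|h
    · have := closure3 w v w2 hvw.ne' hne2 hvw2.ne hvw.symm hvw2 t1 (hsym w h)
      exact hPt (by tauto)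
    · have := closure3 v w w2 hvw.ne hvw2.ne hne2 hvw hww2 t1 (hsym v h)
      exact hPt (by tauto)
    · have := closure3 w2 w v hne2.symm hvw2.ne' hvw.ne' hww2.symm hvw.symm t1 (hsym w2 h)
      exact hPt (by tauto)

end EtaAux

namespace EtaAux
variable {α : Type} [Fintype α] [DecidableEq α] {H : SimpleGraph α}

lemma count_contra1 [DecidableRel H.Adj] (c : α) (hdeg : ∀ v, v ≠ c → H.degree v ≤ 2)
    (hcard : 6 ≤ Fintype.card α) (hedge : 2 * Fintype.card α - 3 ≤ H.edgeFinset.card) :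
    False := by
  have hsum := H.sum_degrees_eq_twice_card_edges
  have hsplit : H.degree c + ∑ v ∈ Finset.univ.erase c, H.degree v = ∑ v, H.degree v :=
    Finset.add_sum_erase Finset.univ (fun v => H.degree v) (Finset.mem_univ c)
  have hbound : ∑ v ∈ Finset.univ.erase c, H.degree v ≤ (Finset.univ.erase c).card * 2 := by
    have := Finset.sum_le_card_nsmul (Finset.univ.erase c) (fun v => H.degree v) 2
      (fun v hv => hdeg v (Finset.ne_of_mem_erase hv))
    simpa [smul_eq_mul, mul_comm] using this
  have hec : (Finset.univ.erase c).card = Fintype.card α - 1 := by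
    rw [Finset.card_erase_of_mem (Finset.mem_univ c), Finset.card_univ]
  have hcc : H.degree c < Fintype.card α := H.degree_lt_card_verts c
  omega

lemma count_contra2 [DecidableRel H.Adj] (b d : α) (hbd : b ≠ d) (hnadj : ¬ H.Adj b d)
    (hdeg : ∀ v, v ≠ b → v ≠ d → H.degree v ≤ 2)
    (hcard : 6 ≤ Fintype.card α) (hedge : 2 * Fintype.card α - 3 ≤ H.edgeFinset.card) :
    False := by
  have hsum := H.sum_degrees_eq_twice_card_edges
  have hsplit1 : H.degree b + ∑ v ∈ Finset.univ.erase b, H.degree v = ∑ v, H.degree v :=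
    Finset.add_sum_erase Finset.univ (fun v => H.degree v) (Finset.mem_univ b)
  have hdmem : d ∈ Finset.univ.erase b := Finset.mem_erase.mpr ⟨hbd.symm, Finset.mem_univ d⟩
  have hsplit2 : H.degree d + ∑ v ∈ (Finset.univ.erase b).erase d, H.degree v
      = ∑ v ∈ Finset.univ.erase b, H.degree v :=
    Finset.add_sum_erase _ (fun v => H.degree v) hdmem
  have hbound : ∑ v ∈ (Finset.univ.erase b).erase d, H.degree v
      ≤ ((Finset.univ.erase b).erase d).card * 2 := by
    have := Finset.sum_le_card_nsmul ((Finset.univ.erase b).erase d) (fun v => H.degree v) 2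
      (fun v hv => hdeg v (Finset.ne_of_mem_erase (Finset.mem_of_mem_erase hv))
        (Finset.ne_of_mem_erase hv))
    simpa [smul_eq_mul, mul_comm] using this
  have hec : ((Finset.univ.erase b).erase d).card = Fintype.card α - 2 := by
    rw [Finset.card_erase_of_mem hdmem, Finset.card_erase_of_mem (Finset.mem_univ b),
      Finset.card_univ]
    omega
  have hdb : H.degree b ≤ Fintype.card α - 2 := by
    have hsub : H.neighborFinset b ⊆ (Finset.univ.erase d).erase b := by
      intro t ht
      rw [SimpleGraph.mem_neighborFinset] at ht
      refine Finset.mem_erase.mpr ⟨ht.ne', Finset.mem_erase.mpr ⟨?_, Finset.mem_univ t⟩⟩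
      rintro rfl
      exact hnadj ht
    have hle := Finset.card_le_card hsub
    have hbmem : b ∈ Finset.univ.erase d := Finset.mem_erase.mpr ⟨hbd, Finset.mem_univ b⟩
    rw [Finset.card_erase_of_mem hbmem, Finset.card_erase_of_mem (Finset.mem_univ d),
      Finset.card_univ] at hle
    exact le_trans hle (by omega)
  have hdd : H.degree d ≤ Fintype.card α - 2 := by
    have hsub : H.neighborFinset d ⊆ (Finset.univ.erase b).erase d := by
      intro t ht
      rw [SimpleGraph.mem_neighborFinset] at ht
      refine Finset.mem_erase.mpr ⟨ht.ne', Finset.mem_erase.mpr ⟨?_, Finset.mem_univ t⟩⟩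
      rintro rfl
      exact hnadj ht.symm
    have hle := Finset.card_le_card hsub
    rw [Finset.card_erase_of_mem hdmem, Finset.card_erase_of_mem (Finset.mem_univ b),
      Finset.card_univ] at hle
    exact le_trans hle (by omega)
  omega

end EtaAux


namespace EtaAux
variable {α : Type} [Fintype α] [DecidableEq α] {H : SimpleGraph α}

set_option maxHeartbeats 1600000 in
theorem structure_B [DecidableRel H.Adj] (hconn : H.Connected)
    (hfree : ¬ ContainsSub (SimpleGraph.pathGraph 6) H)
    (htwo : ∀ v : α, 2 ≤ H.degree v)
    (hcard : 6 ≤ Fintype.card α)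
    (hedge : 2 * Fintype.card α - 3 ≤ H.edgeFinset.card) :
    Nonempty (H ≃g K2Join (Fintype.card α - 2)) := by
  obtain ⟨a, b, c, d, e, ⟨dab,dac,dad,dae,dbc,dbd,dbe,dcd,dce,dde⟩, hab, hbc, hcd, hde⟩ :=
    exists_chain5 hconn htwo hcard
  have no6 : ∀ u1 u2 u3 u4 u5 u6 : α, u1 ≠ u2 → u1 ≠ u3 → u1 ≠ u4 → u1 ≠ u5 → u1 ≠ u6 →
      u2 ≠ u3 → u2 ≠ u4 → u2 ≠ u5 → u2 ≠ u6 → u3 ≠ u4 → u3 ≠ u5 → u3 ≠ u6 →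
      u4 ≠ u5 → u4 ≠ u6 → u5 ≠ u6 → H.Adj u1 u2 → H.Adj u2 u3 → H.Adj u3 u4 →
      H.Adj u4 u5 → H.Adj u5 u6 → False :=
    fun u1 u2 u3 u4 u5 u6 n1 n2 n3 n4 n5 n6 n7 n8 n9 n10 n11 n12 n13 n14 n15 g1 g2 g3 g4 g5 =>
      hfree (p6_of_chain u1 u2 u3 u4 u5 u6 n1 n2 n3 n4 n5 n6 n7 n8 n9 n10 n11 n12 n13 n14 n15
        g1 g2 g3 g4 g5)
  have Na : ∀ t, H.Adj a t → t = b ∨ t = c ∨ t = d ∨ t = e := by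
    intro t ht
    by_contra hcn
    push_neg at hcn
    obtain ⟨n1, n2, n3, n4⟩ := hcn
    exact no6 t a b c d e ht.ne' n1 n2 n3 n4 dab dac dad dae dbc dbd dbe dcd dce dde
      ht.symm hab hbc hcd hde
  have Ne' : ∀ t, H.Adj e t → t = d ∨ t = c ∨ t = b ∨ t = a := by
    intro t ht
    by_contra hcn
    push_neg at hcn
    obtain ⟨n1, n2, n3, n4⟩ := hcn
    exact no6 t e d c b a ht.ne' n1 n2 n3 n4 dde.symm dce.symm dbe.symm dae.symm dcd.symm
      dbd.symm dad.symm dbc.symm dac.symm dab.symm ht.symm hde.symm hcd.symm hbc.symm hab.symm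
  by_cases hF : ∃ u, u ≠ a ∧ u ≠ b ∧ u ≠ c ∧ u ≠ d ∧ u ≠ e ∧
      H.Adj u c ∧ ¬ H.Adj u b ∧ ¬ H.Adj u d
  · -- friendship-type branch: contradiction
    exfalso
    obtain ⟨u, ua, ub, uc, ud, ue, huc, hnub, hnud⟩ := hF
    have hnua : ¬ H.Adj u a := by
      intro h
      rcases Na u h.symm with h'|h'|h'|h'
      exacts [ub h', uc h', ud h', ue h']
    have hnue : ¬ H.Adj u e := by
      intro h
      rcases Ne' u h.symm with h'|h'|h'|h'
      exacts [ud h', uc h', ub h', ua h']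
    -- the partner-closure lemma
    have PartnerClosed : ∀ y y' : α,
        y ≠ a → y ≠ b → y ≠ c → y ≠ d → y ≠ e →
        y' ≠ a → y' ≠ b → y' ≠ c → y' ≠ d → y' ≠ e →
        H.Adj y c → H.Adj y y' → ∀ t, H.Adj y' t → t = y ∨ t = c := by
      intro y y' ya yb yc yd ye y'a y'b y'c y'd y'e hyc hyy' t ht
      by_contra hcn
      push_neg at hcn
      obtain ⟨hty, htc⟩ := hcn
      have hty' : t ≠ y' := ht.ne'
      rcases eq_or_ne t d with h|htd
      · have hAd : H.Adj y' d := h ▸ ht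
        exact no6 e d y' y c b dde.symm y'e.symm ye.symm dce.symm dbe.symm y'd.symm yd.symm
          dcd.symm dbd.symm hyy'.ne' y'c y'b yc yb dbc.symm
          hde.symm hAd.symm hyy'.symm hyc hbc.symm
      rcases eq_or_ne t e with h|hte
      · have hAe : H.Adj y' e := h ▸ ht
        exact no6 a b c y y' e dab dac ya.symm y'a.symm dae dbc yb.symm y'b.symm dbe yc.symm
          y'c.symm dce hyy'.ne ye y'e
          hab hbc hyc.symm hyy' hAe
      rcases eq_or_ne t a with h|hta
      · have hAa : H.Adj a y' := (h ▸ ht).symm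
        rcases Na y' hAa with h'|h'|h'|h'
        exacts [y'b h', y'c h', y'd h', y'e h']
      rcases eq_or_ne t b with h|htb
      · have hAb : H.Adj y' b := h ▸ ht
        exact no6 e d c y y' b dde.symm dce.symm ye.symm y'e.symm dbe.symm dcd.symm yd.symm
          y'd.symm dbd.symm yc.symm y'c.symm dbc.symm hyy'.ne yb y'b
          hde.symm hcd.symm hyc.symm hyy' hAb
      · exact no6 t y' y c d e ht.ne' hty htc htd hte hyy'.ne' y'c y'd y'e yc yd ye dcd dce dde
          ht.symm hyy'.symm hyc hcd hde
    -- the partner of an O-vertex adjacent to c is adjacent to c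
    have PartnerC : ∀ y y' : α,
        y ≠ a → y ≠ b → y ≠ c → y ≠ d → y ≠ e →
        y' ≠ a → y' ≠ b → y' ≠ c → y' ≠ d → y' ≠ e →
        H.Adj y c → H.Adj y y' → H.Adj y' c := by
      intro y y' ya yb yc yd ye y'a y'b y'c y'd y'e hyc hyy'
      obtain ⟨n1, n2, hnn, h1, h2⟩ := two_nbrs (htwo y')
      rcases PartnerClosed y y' ya yb yc yd ye y'a y'b y'c y'd y'e hyc hyy' n1 h1 with hh|hh
      · rcases PartnerClosed y y' ya yb yc yd ye y'a y'b y'c y'd y'e hyc hyy' n2 h2 with hh2|hh2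
        · exact absurd (hh.trans hh2.symm) hnn
        · exact hh2 ▸ h2
      · exact hh ▸ h1
    obtain ⟨u', huu', hu'c⟩ : ∃ u', H.Adj u u' ∧ u' ≠ c := by
      obtain ⟨n1, n2, hnn, h1, h2⟩ := two_nbrs (htwo u)
      rcases eq_or_ne n1 c with rfl|h
      · exact ⟨n2, h2, by rintro rfl; exact hnn rfl⟩
      · exact ⟨n1, h1, h⟩
    have hu'a : u' ≠ a := by rintro rfl; exact hnua huu'
    have hu'b : u' ≠ b := by rintro rfl; exact hnub huu'
    have hu'd : u' ≠ d := by rintro rfl; exact hnud huu'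
    have hu'e : u' ≠ e := by rintro rfl; exact hnue huu'
    have Nu' : ∀ t, H.Adj u' t → t = u ∨ t = c :=
      PartnerClosed u u' ua ub uc ud ue hu'a hu'b hu'c hu'd hu'e huc huu'
    have hu'cA : H.Adj u' c := PartnerC u u' ua ub uc ud ue hu'a hu'b hu'c hu'd hu'e huc huu'
    have hnad : ¬ H.Adj a d := by
      intro had
      exact no6 u' u c d a b huu'.ne' hu'c hu'd hu'a hu'b uc ud ua ub dcd dac.symm dbc.symm
        dad.symm dbd.symm dab
        huu'.symm huc hcd had.symm hab
    have hnae : ¬ H.Adj a e := by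
      intro hae
      exact no6 u' u c d e a huu'.ne' hu'c hu'd hu'e hu'a uc ud ue ua dcd dce dac.symm dde
        dad.symm dae.symm
        huu'.symm huc hcd hde hae.symm
    have NaS : ∀ t, H.Adj a t → t = b ∨ t = c := by
      intro t ht
      rcases Na t ht with h|h|h|h
      · exact Or.inl h
      · exact Or.inr h
      · exact absurd (h ▸ ht) hnad
      · exact absurd (h ▸ ht) hnae
    have hac : H.Adj a c := by
      obtain ⟨n1, n2, hnn, h1, h2⟩ := two_nbrs (htwo a)
      rcases NaS n1 h1 with rfl|rfl
      · rcases NaS n2 h2 with rfl|rfl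
        · exact absurd rfl hnn
        · exact h2
      · exact h1
    have hneb : ¬ H.Adj e b := by
      intro heb
      exact no6 u' u c b e d huu'.ne' hu'c hu'b hu'e hu'd uc ub ue ud dbc.symm dce dcd dbe
        dbd dde.symm
        huu'.symm huc hbc.symm heb.symm hde.symm
    have NeS : ∀ t, H.Adj e t → t = c ∨ t = d := by
      intro t ht
      rcases Ne' t ht with h|h|h|h
      · exact Or.inr h
      · exact Or.inl h
      · exact absurd (h ▸ ht) hneb
      · exact absurd ((h ▸ ht).symm) hnae
    have hec : H.Adj e c := by
      obtain ⟨n1, n2, hnn, h1, h2⟩ := two_nbrs (htwo e)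
      rcases NeS n1 h1 with hh|hh
      · exact hh ▸ h1
      · rcases NeS n2 h2 with hh2|hh2
        · exact hh2 ▸ h2
        · exact absurd (hh.trans hh2.symm) hnn
    have hnbd : ¬ H.Adj b d := by
      intro hbd
      exact no6 e d b a c u dde.symm dbe.symm dae.symm dce.symm ue.symm dbd.symm dad.symm
        dcd.symm ud.symm dab.symm dbc ub.symm dac ua.symm uc.symm
        hde.symm hbd.symm hab.symm hac huc.symm
    have Nb : ∀ t, H.Adj b t → t = a ∨ t = c := by
      intro t ht
      rcases eq_or_ne t a with h|hta
      · exact Or.inl h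
      rcases eq_or_ne t c with h|htc
      · exact Or.inr h
      exfalso
      rcases eq_or_ne t d with h|htd
      · exact hnbd (h ▸ ht)
      rcases eq_or_ne t e with h|hte
      · exact hneb ((h ▸ ht).symm)
      rcases eq_or_ne t u with h|htu
      · exact hnub ((h ▸ ht).symm)
      rcases eq_or_ne t u' with h|htu'
      · rcases Nu' b (h ▸ ht).symm with h'|h'
        · exact ub h'.symm
        · exact dbc h'
      · exact no6 t b a c u u' ht.ne' hta htc htu htu' dab.symm dbc ub.symm hu'b.symm dac
          ua.symm hu'a.symm uc.symm hu'c.symm huu'.ne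
          ht.symm hab.symm hac huc.symm huu'
    have Nd : ∀ t, H.Adj d t → t = c ∨ t = e := by
      intro t ht
      rcases eq_or_ne t c with h|htc
      · exact Or.inl h
      rcases eq_or_ne t e with h|hte
      · exact Or.inr h
      exfalso
      rcases eq_or_ne t a with h|hta
      · exact hnad (h ▸ ht).symm
      rcases eq_or_ne t b with h|htb
      · exact hnbd ((h ▸ ht).symm)
      rcases eq_or_ne t u with h|htu
      · exact hnud ((h ▸ ht).symm)
      rcases eq_or_ne t u' with h|htu'
      · rcases Nu' d (h ▸ ht).symm with h'|h'
        · exact ud h'.symm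
        · exact dcd h'.symm
      · exact no6 t d e c u u' ht.ne' hte htc htu htu' dde dcd.symm ud.symm hu'd.symm
          dce.symm ue.symm hu'e.symm uc.symm hu'c.symm huu'.ne
          ht.symm hde hec huc.symm huu'
    have hOc : ∀ y, y ≠ a → y ≠ b → y ≠ c → y ≠ d → y ≠ e → H.Adj y c := by
      by_contra hcn
      push_neg at hcn
      obtain ⟨y, y1, y2, y3, y4, y5, hnyc⟩ := hcn
      obtain ⟨s1, t1, hPs, hPt, hadj⟩ := crossing hconn
        (fun x => x ≠ a ∧ x ≠ b ∧ x ≠ c ∧ x ≠ d ∧ x ≠ e ∧ ¬ H.Adj x c)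
        ⟨y1, y2, y3, y4, y5, hnyc⟩ (fun h => h.1 rfl)
      obtain ⟨s1a, s1b, s1c, s1d, s1e, hs1c⟩ := hPs
      rcases eq_or_ne t1 a with h|h1a
      · rcases Na s1 (h ▸ hadj).symm with h'|h'|h'|h'
        exacts [s1b h', s1c h', s1d h', s1e h']
      rcases eq_or_ne t1 b with h|h1b
      · rcases Nb s1 (h ▸ hadj).symm with h'|h'
        exacts [s1a h', s1c h']
      rcases eq_or_ne t1 c with h|h1c
      · exact hs1c (h ▸ hadj)
      rcases eq_or_ne t1 d with h|h1d
      · rcases Nd s1 (h ▸ hadj).symm with h'|h'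
        exacts [s1c h', s1e h']
      rcases eq_or_ne t1 e with h|h1e
      · rcases Ne' s1 (h ▸ hadj).symm with h'|h'|h'|h'
        exacts [s1d h', s1c h', s1b h', s1a h']
      have ht1c : H.Adj t1 c := by
        by_contra hno
        exact hPt ⟨h1a, h1b, h1c, h1d, h1e, hno⟩
      exact hs1c (PartnerC t1 s1 h1a h1b h1c h1d h1e s1a s1b s1c s1d s1e ht1c hadj.symm)
    have OdegLe : ∀ y, y ≠ a → y ≠ b → y ≠ c → y ≠ d → y ≠ e → H.degree y ≤ 2 := by
      intro y y1 y2 y3 y4 y5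
      have hyc := hOc y y1 y2 y3 y4 y5
      by_cases hex : ∃ t, H.Adj y t ∧ t ≠ c
      · obtain ⟨y', hy', hy'c⟩ := hex
        have y'a : y' ≠ a := by
          rintro rfl
          rcases Na y hy'.symm with h|h|h|h
          exacts [y2 h, y3 h, y4 h, y5 h]
        have y'b : y' ≠ b := by
          rintro rfl
          rcases Nb y hy'.symm with h|h
          exacts [y1 h, y3 h]
        have y'd : y' ≠ d := by
          rintro rfl
          rcases Nd y hy'.symm with h|h
          exacts [y3 h, y5 h]
        have y'e : y' ≠ e := by
          rintro rfl
          rcases Ne' y hy'.symm with h|h|h|h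
          exacts [y4 h, y3 h, y2 h, y1 h]
        have hy'cA : H.Adj y' c := PartnerC y y' y1 y2 y3 y4 y5 y'a y'b hy'c y'd y'e hyc hy'
        apply deg_le_two (p := c) (q := y')
        intro t ht
        rcases eq_or_ne t c with h|htc
        · exact Or.inl h
        rcases eq_or_ne t y' with h|hty'
        · exact Or.inr h
        exfalso
        have td : t ≠ d := by
          rintro rfl
          rcases Nd y ht.symm with h|h
          exacts [y3 h, y5 h]
        have te : t ≠ e := by
          rintro rfl
          rcases Ne' y ht.symm with h|h|h|h
          exacts [y4 h, y3 h, y2 h, y1 h]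
        exact no6 t y y' c d e ht.ne' hty' htc td te hy'.ne y3 y4 y5 hy'c y'd y'e dcd dce dde
          ht.symm hy' hy'cA hcd hde
      · push_neg at hex
        apply deg_le_two (p := c) (q := c)
        intro t ht
        exact Or.inl (hex t ht)
    refine count_contra1 c ?_ hcard hedge
    intro v hvc
    rcases eq_or_ne v a with rfl|va
    · exact deg_le_two NaS
    rcases eq_or_ne v b with rfl|vb
    · exact deg_le_two Nb
    rcases eq_or_ne v d with rfl|vd
    · exact deg_le_two Nd
    rcases eq_or_ne v e with rfl|ve
    · exact deg_le_two NeS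
    · exact OdegLe v va vb hvc vd ve
  · -- main branch: H ≅ K2 ∨ (n-2)K1 with hubs b, d
    have hFc : ∀ u, u ≠ a → u ≠ b → u ≠ c → u ≠ d → u ≠ e → H.Adj u c →
        H.Adj u b ∨ H.Adj u d := by
      intro u h1 h2 h3 h4 h5 h6
      by_contra hc
      push_neg at hc
      exact hF ⟨u, h1, h2, h3, h4, h5, h6, hc.1, hc.2⟩
    have NcO : ∀ u, u ≠ a → u ≠ b → u ≠ c → u ≠ d → u ≠ e → ¬ H.Adj u c := by
      intro u h1 h2 h3 h4 h5 huc
      rcases hFc u h1 h2 h3 h4 h5 huc with h|h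
      · exact no6 a b u c d e dab h1.symm dac dad dae h2.symm dbc dbd dbe h3 h4 h5 dcd dce dde
          hab h.symm huc hcd hde
      · exact no6 a b c u d e dab dac h1.symm dad dae dbc h2.symm dbd dbe h3.symm dcd dce
          h4 h5 dde
          hab hbc huc.symm h hde
    have NO2' : ∀ u, u ≠ a → u ≠ b → u ≠ c → u ≠ d → u ≠ e →
        (H.Adj u b ∨ H.Adj u d) → ∀ t, H.Adj u t → t = b ∨ t = d := by
      intro u h1 h2 h3 h4 h5 hor t ht
      rcases eq_or_ne t b with h|htb
      · exact Or.inl h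
      rcases eq_or_ne t d with h|htd
      · exact Or.inr h
      exfalso
      rcases eq_or_ne t a with h|hta
      · rcases Na u (h ▸ ht).symm with h'|h'|h'|h'
        exacts [h2 h', h3 h', h4 h', h5 h']
      rcases eq_or_ne t c with h|htc
      · exact NcO u h1 h2 h3 h4 h5 (h ▸ ht)
      rcases eq_or_ne t e with h|hte
      · rcases Ne' u (h ▸ ht).symm with h'|h'|h'|h'
        exacts [h4 h', h3 h', h2 h', h1 h']
      rcases hor with h|h
      · exact no6 t u b c d e ht.ne' htb htc htd hte h2 h3 h4 h5 dbc dbd dbe dcd dce dde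
          ht.symm h hbc hcd hde
      · exact no6 t u d c b a ht.ne' htd htc htb hta h4 h3 h2 h1 dcd.symm dbd.symm dad.symm
          dbc.symm dac.symm dab.symm
          ht.symm h hcd.symm hbc.symm hab.symm
    have hObd : ∀ u, u ≠ a → u ≠ b → u ≠ c → u ≠ d → u ≠ e → H.Adj u b ∨ H.Adj u d := by
      by_contra hcn
      push_neg at hcn
      obtain ⟨y, y1, y2, y3, y4, y5, hnybd⟩ := hcn
      obtain ⟨s1, t1, hPs, hPt, hadj⟩ := crossing hconn
        (fun x => x ≠ a ∧ x ≠ b ∧ x ≠ c ∧ x ≠ d ∧ x ≠ e ∧ ¬ H.Adj x b ∧ ¬ H.Adj x d)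
        ⟨y1, y2, y3, y4, y5, hnybd.1, hnybd.2⟩ (fun h => h.1 rfl)
      obtain ⟨s1a, s1b, s1c, s1d, s1e, hs1b, hs1d⟩ := hPs
      rcases eq_or_ne t1 a with h|h1a
      · rcases Na s1 (h ▸ hadj).symm with h'|h'|h'|h'
        exacts [s1b h', s1c h', s1d h', s1e h']
      rcases eq_or_ne t1 b with h|h1b
      · exact hs1b (h ▸ hadj)
      rcases eq_or_ne t1 c with h|h1c
      · exact NcO s1 s1a s1b s1c s1d s1e (h ▸ hadj)
      rcases eq_or_ne t1 d with h|h1d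
      · exact hs1d (h ▸ hadj)
      rcases eq_or_ne t1 e with h|h1e
      · rcases Ne' s1 (h ▸ hadj).symm with h'|h'|h'|h'
        exacts [s1d h', s1c h', s1b h', s1a h']
      have hor : H.Adj t1 b ∨ H.Adj t1 d := by
        by_contra hno
        push_neg at hno
        exact hPt ⟨h1a, h1b, h1c, h1d, h1e, hno.1, hno.2⟩
      rcases NO2' t1 h1a h1b h1c h1d h1e hor s1 hadj.symm with h'|h'
      exacts [s1b h', s1d h']
    have NO2 : ∀ u, u ≠ a → u ≠ b → u ≠ c → u ≠ d → u ≠ e →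
        ∀ t, H.Adj u t → t = b ∨ t = d := fun u h1 h2 h3 h4 h5 =>
      NO2' u h1 h2 h3 h4 h5 (hObd u h1 h2 h3 h4 h5)
    obtain ⟨u0, w1, w2, w3, w4, w5⟩ := exists_notin5 hcard a b c d e
    have hu0bd : H.Adj u0 b ∧ H.Adj u0 d := by
      obtain ⟨n1, n2, hnn, h1, h2⟩ := two_nbrs (htwo u0)
      rcases NO2 u0 w1 w2 w3 w4 w5 n1 h1 with hh|hh
      · rcases NO2 u0 w1 w2 w3 w4 w5 n2 h2 with hh2|hh2
        · exact absurd (hh.trans hh2.symm) hnn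
        · exact ⟨hh ▸ h1, hh2 ▸ h2⟩
      · rcases NO2 u0 w1 w2 w3 w4 w5 n2 h2 with hh2|hh2
        · exact ⟨hh2 ▸ h2, hh ▸ h1⟩
        · exact absurd (hh.trans hh2.symm) hnn
    obtain ⟨hu0b, hu0d⟩ := hu0bd
    have hnae : ¬ H.Adj a e := by
      intro h
      exact no6 u0 b a e d c w2 w1 w5 w4 w3 dab.symm dbe dbd dbc dae dad dac dde.symm
        dce.symm dcd.symm
        hu0b hab.symm h hde.symm hcd.symm
    have hnac : ¬ H.Adj a c := by
      intro h
      exact no6 e d u0 b a c dde.symm w5.symm dbe.symm dae.symm dce.symm w4.symm dbd.symm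
        dad.symm dcd.symm w2 w1 w3 dab.symm dbc dac
        hde.symm hu0d.symm hu0b hab.symm h
    have NaS : ∀ t, H.Adj a t → t = b ∨ t = d := by
      intro t ht
      rcases Na t ht with h|h|h|h
      · exact Or.inl h
      · exact absurd (h ▸ ht) hnac
      · exact Or.inr h
      · exact absurd (h ▸ ht) hnae
    have had : H.Adj a d := by
      obtain ⟨n1, n2, hnn, h1, h2⟩ := two_nbrs (htwo a)
      rcases NaS n1 h1 with hh|hh
      · rcases NaS n2 h2 with hh2|hh2
        · exact absurd (hh.trans hh2.symm) hnn
        · exact hh2 ▸ h2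
      · exact hh ▸ h1
    have hnec : ¬ H.Adj e c := by
      intro h
      exact no6 a b u0 d e c dab w1.symm dad dae dac w2.symm dbd dbe dbc w4 w5 w3 dde
        dcd.symm dce.symm
        hab hu0b.symm hu0d hde h
    have NeS2 : ∀ t, H.Adj e t → t = b ∨ t = d := by
      intro t ht
      rcases Ne' t ht with h|h|h|h
      · exact Or.inr h
      · exact absurd (h ▸ ht) hnec
      · exact Or.inl h
      · exact absurd ((h ▸ ht).symm) hnae
    have heb : H.Adj e b := by
      obtain ⟨n1, n2, hnn, h1, h2⟩ := two_nbrs (htwo e)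
      rcases NeS2 n1 h1 with hh|hh
      · exact hh ▸ h1
      · rcases NeS2 n2 h2 with hh2|hh2
        · exact hh2 ▸ h2
        · exact absurd (hh.trans hh2.symm) hnn
    have NcS : ∀ t, H.Adj c t → t = b ∨ t = d := by
      intro t ht
      rcases eq_or_ne t b with h|htb
      · exact Or.inl h
      rcases eq_or_ne t d with h|htd
      · exact Or.inr h
      exfalso
      rcases eq_or_ne t a with h|hta
      · exact hnac (h ▸ ht).symm
      rcases eq_or_ne t e with h|hte
      · exact hnec (h ▸ ht).symm
      · exact NcO t hta htb ht.ne' htd hte ht.symm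
    have Nleaf : ∀ v, v ≠ b → v ≠ d → ∀ t, H.Adj v t → t = b ∨ t = d := by
      intro v hvb hvd t ht
      rcases eq_or_ne v a with h|hva
      · exact NaS t (h ▸ ht)
      rcases eq_or_ne v c with h|hvc
      · exact NcS t (h ▸ ht)
      rcases eq_or_ne v e with h|hve
      · exact NeS2 t (h ▸ ht)
      · exact NO2 v hva hvb hvc hvd hve t ht
    have leafBoth : ∀ v, v ≠ b → v ≠ d → H.Adj v b ∧ H.Adj v d := by
      intro v hvb hvd
      obtain ⟨n1, n2, hnn, h1, h2⟩ := two_nbrs (htwo v)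
      rcases Nleaf v hvb hvd n1 h1 with hh|hh
      · rcases Nleaf v hvb hvd n2 h2 with hh2|hh2
        · exact absurd (hh.trans hh2.symm) hnn
        · exact ⟨hh ▸ h1, hh2 ▸ h2⟩
      · rcases Nleaf v hvb hvd n2 h2 with hh2|hh2
        · exact ⟨hh2 ▸ h2, hh ▸ h1⟩
        · exact absurd (hh.trans hh2.symm) hnn
    have hbd : H.Adj b d := by
      by_contra hnbd
      exact count_contra2 b d dbd hnbd (fun v h1 h2 => deg_le_two (Nleaf v h1 h2)) hcard hedge
    have hchar : ∀ v w, H.Adj v w ↔ (v ≠ w ∧ (v = b ∨ v = d ∨ w = b ∨ w = d)) := by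
      intro v w
      constructor
      · intro h
        refine ⟨h.ne, ?_⟩
        by_contra hc
        push_neg at hc
        obtain ⟨h1, h2, h3, h4⟩ := hc
        rcases Nleaf v h1 h2 w h with h'|h'
        exacts [h3 h', h4 h']
      · rintro ⟨hne, hor⟩
        rcases eq_or_ne v b with rfl|hvb
        · rcases eq_or_ne w d with rfl|hwd
          · exact hbd
          · exact ((leafBoth w (Ne.symm hne) hwd).1).symm
        rcases eq_or_ne v d with rfl|hvd
        · rcases eq_or_ne w b with rfl|hwb
          · exact hbd.symm
          · exact ((leafBoth w hwb (Ne.symm hne)).2).symm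
        rcases hor with h|h|h|h
        · exact absurd h hvb
        · exact absurd h hvd
        · rw [h]; exact (leafBoth v hvb hvd).1
        · rw [h]; exact (leafBoth v hvb hvd).2
    have hcard2 : Fintype.card α = (Fintype.card α - 2) + 2 := by omega
    let e0 : α ≃ Fin ((Fintype.card α - 2) + 2) := Fintype.equivFinOfCardEq hcard2
    let e1 : α ≃ Fin ((Fintype.card α - 2) + 2) := e0.trans (Equiv.swap (e0 b) 0)
    have he1b : e1 b = 0 := Equiv.swap_apply_left (e0 b) 0
    let e2 : α ≃ Fin ((Fintype.card α - 2) + 2) := e1.trans (Equiv.swap (e1 d) 1)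
    have he2d : e2 d = 1 := Equiv.swap_apply_left (e1 d) 1
    have hd0 : e1 d ≠ (0 : Fin ((Fintype.card α - 2) + 2)) := by
      rw [← he1b]
      intro h
      exact dbd (e1.injective h).symm
    have h01 : (0 : Fin ((Fintype.card α - 2) + 2)) ≠ 1 := by
      intro h
      have := congrArg Fin.val h
      simp [Fin.val_one] at this
    have he2b : e2 b = 0 := by
      show (Equiv.swap (e1 d) 1) (e1 b) = 0
      rw [he1b]
      exact Equiv.swap_apply_of_ne_of_ne (Ne.symm hd0) h01
    have keyv : ∀ v : α, ((e2 v : ℕ) < 2) ↔ (v = b ∨ v = d) := by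
      intro v
      constructor
      · intro h
        have hv : (e2 v : ℕ) = 0 ∨ (e2 v : ℕ) = 1 := by omega
        rcases hv with h'|h'
        · left
          refine e2.injective (?_ : e2 v = e2 b)
          rw [he2b]
          exact Fin.ext (by simpa using h')
        · right
          refine e2.injective (?_ : e2 v = e2 d)
          rw [he2d]
          exact Fin.ext (by simpa [Fin.val_one] using h')
      · rintro (rfl|rfl)
        · rw [he2b]; simp
        · rw [he2d]; simp [Fin.val_one]
    refine ⟨⟨e2, ?_⟩⟩
    intro v w
    show (K2Join (Fintype.card α - 2)).Adj (e2 v) (e2 w) ↔ H.Adj v w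
    rw [hchar v w, K2Join, SimpleGraph.fromRel_adj]
    have h3 : (e2 v = e2 w) ↔ v = w := e2.apply_eq_iff_eq
    have k1 := keyv v
    have k2 := keyv w
    constructor
    · rintro ⟨hne', hlt⟩
      refine ⟨fun hh => hne' (by rw [hh]), ?_⟩
      have hl2 : ((e2 v : ℕ) < 2) ∨ ((e2 w : ℕ) < 2) := by
        rcases hlt with (h|h)|(h|h)
        exacts [Or.inl h, Or.inr h, Or.inr h, Or.inl h]
      rcases hl2 with h|h
      · rcases k1.mp h with h'|h'
        exacts [Or.inl h', Or.inr (Or.inl h')]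
      · rcases k2.mp h with h'|h'
        exacts [Or.inr (Or.inr (Or.inl h')), Or.inr (Or.inr (Or.inr h'))]
    · rintro ⟨hne', hor⟩
      refine ⟨fun hh => hne' (h3.mp hh), ?_⟩
      rcases hor with h|h|h|h
      exacts [Or.inl (Or.inl (k1.mpr (Or.inl h))), Or.inl (Or.inl (k1.mpr (Or.inr h))),
        Or.inl (Or.inr (k2.mpr (Or.inl h))), Or.inl (Or.inr (k2.mpr (Or.inr h)))]

end EtaAux

/-- If `H = G[S]` is a component of `G[N(u*)]` with at least 6 vertices and
minimum degree at least 2, `G[N(u*)]` is `P₆`-free, and `η(H) = -3`, then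
`H ≅ K₂ ∨ (|V(H)| − 2)K₁`. -/
theorem eta_eq_neg_three_structure {V : Type} [Fintype V] [DecidableEq V]
    (G : SimpleGraph V) [DecidableRel G.Adj] (hconn : G.Connected)
    (x : V → ℝ) (hpos : ∀ v, 0 < x v) (heig : G.adjMatrix ℝ *ᵥ x = specRad G • x)
    (ustar : V) (hmax : ∀ v, x v ≤ x ustar)
    (hP6free : ¬ ContainsSub (SimpleGraph.pathGraph 6) (G.induce (G.neighborSet ustar)))
    (S : Finset V)
    (hSnbr : ∀ v ∈ S, G.Adj ustar v)
    (hSconn : (G.induce (S : Set V)).Connected)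
    (hSclosed : ∀ a ∈ S, ∀ b, G.Adj ustar b → G.Adj a b → b ∈ S)
    (hScard : 6 ≤ S.card)
    (hdelta : ∀ u ∈ S, 2 ≤ (S.filter (fun w => G.Adj u w)).card)
    (heta : etaVal G x ustar S = -3) :
    Nonempty (G.induce (S : Set V) ≃g K2Join (S.card - 2)) := by
  classical
  have hcardS : Fintype.card ((S : Set V) : Type) = S.card := by
    rw [← Fintype.card_coe S]
    exact Fintype.card_congr (Equiv.subtypeEquivRight (fun z => Iff.rfl))
  have hdeg : ∀ (u : V) (hu : u ∈ (S : Set V)),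
      (G.induce (S : Set V)).degree ⟨u, hu⟩ = (S.filter (fun w => G.Adj u w)).card := by
    intro u hu
    rw [SimpleGraph.degree]
    have himg : S.filter (fun w => G.Adj u w)
        = ((G.induce (S : Set V)).neighborFinset ⟨u, hu⟩).image Subtype.val := by
      ext y
      rw [Finset.mem_filter, Finset.mem_image]
      constructor
      · rintro ⟨hyS, hyadj⟩
        refine ⟨⟨y, hyS⟩, ?_, rfl⟩
        rw [SimpleGraph.mem_neighborFinset]
        exact hyadj
      · rintro ⟨z, hz, rfl⟩
        rw [SimpleGraph.mem_neighborFinset] at hz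
        exact ⟨z.2, hz⟩
    rw [himg, Finset.card_image_of_injective _ Subtype.val_injective]
  have hhand : ∑ v, (G.induce (S : Set V)).degree v
      = ∑ u ∈ S, (S.filter (fun w => G.Adj u w)).card := by
    apply Finset.sum_bij (fun (v : (S : Set V)) _ => (v : V))
    · intro z _
      exact z.2
    · intro z1 _ z2 _ h
      exact Subtype.ext h
    · intro y hy
      exact ⟨⟨y, hy⟩, Finset.mem_univ _, rfl⟩
    · intro z _
      exact hdeg z.1 z.2
  have hhand2 : ∑ u ∈ S, (S.filter (fun w => G.Adj u w)).card
      = 2 * (G.induce (S : Set V)).edgeFinset.card := by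
    rw [← hhand, SimpleGraph.sum_degrees_eq_twice_card_edges]
  have hedges : edgesIn G (S : Set V) = (G.induce (S : Set V)).edgeFinset.card := by
    rw [edgesIn]
    have himg : {e ∈ G.edgeSet | ∀ v ∈ e, v ∈ (S : Set V)} =
        Sym2.map (Subtype.val : ((S : Set V) : Type) → V) '' (G.induce (S : Set V)).edgeSet := by
      ext e
      induction e with
      | _ p q =>
        constructor
        · rintro ⟨he1, he2⟩
          rw [SimpleGraph.mem_edgeSet] at he1
          have hp : p ∈ (S : Set V) := he2 p (by simp)
          have hq : q ∈ (S : Set V) := he2 q (by simp)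
          refine ⟨s(⟨p, hp⟩, ⟨q, hq⟩), ?_, ?_⟩
          · rw [SimpleGraph.mem_edgeSet]
            exact he1
          · rw [Sym2.map_pair_eq]
        · rintro ⟨e', he', hmap⟩
          induction e' with
          | _ z1 z2 =>
            rw [SimpleGraph.mem_edgeSet] at he'
            rw [Sym2.map_pair_eq] at hmap
            constructor
            · rw [← hmap, SimpleGraph.mem_edgeSet]
              exact he'
            · intro v hv
              rw [← hmap, Sym2.mem_iff] at hv
              rcases hv with rfl|rfl
              exacts [z1.2, z2.2]
    rw [himg, Set.ncard_image_of_injective _ (Sym2.map.injective Subtype.val_injective),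
      SimpleGraph.edgeFinset, Set.ncard_eq_toFinset_card']
  -- the edge-count lower bound from η = -3
  have hE3 : 2 * S.card ≤ (G.induce (S : Set V)).edgeFinset.card + 3 := by
    have hxpos : (0 : ℝ) < x ustar := hpos ustar
    have hterm : ∀ u ∈ S, (((S.filter (fun w => G.Adj u w)).card : ℝ) - 2) * x u / x ustar
        ≤ (((S.filter (fun w => G.Adj u w)).card : ℝ) - 2) := by
      intro u hu
      have h2 : (2 : ℝ) ≤ ((S.filter (fun w => G.Adj u w)).card : ℝ) := by
        exact_mod_cast hdelta u hu
      have hdiv : x u / x ustar ≤ 1 := div_le_one_of_le₀ (hmax u) (le_of_lt hxpos)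
      have hnn : (0 : ℝ) ≤ ((S.filter (fun w => G.Adj u w)).card : ℝ) - 2 := by linarith
      calc (((S.filter (fun w => G.Adj u w)).card : ℝ) - 2) * x u / x ustar
          = (((S.filter (fun w => G.Adj u w)).card : ℝ) - 2) * (x u / x ustar) := by ring
        _ ≤ (((S.filter (fun w => G.Adj u w)).card : ℝ) - 2) * 1 :=
            mul_le_mul_of_nonneg_left hdiv hnn
        _ = ((S.filter (fun w => G.Adj u w)).card : ℝ) - 2 := by ring
    have hsumle : ∑ u ∈ S, (((S.filter (fun w => G.Adj u w)).card : ℝ) - 2) * x u / x ustar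
        ≤ ∑ u ∈ S, (((S.filter (fun w => G.Adj u w)).card : ℝ) - 2) :=
      Finset.sum_le_sum hterm
    have hsum2 : ∑ u ∈ S, (((S.filter (fun w => G.Adj u w)).card : ℝ) - 2)
        = 2 * ((G.induce (S : Set V)).edgeFinset.card : ℝ) - 2 * (S.card : ℝ) := by
      rw [Finset.sum_sub_distrib]
      have hc : ∑ u ∈ S, (((S.filter (fun w => G.Adj u w)).card : ℕ) : ℝ)
          = ((∑ u ∈ S, (S.filter (fun w => G.Adj u w)).card : ℕ) : ℝ) := by
        push_cast
        rfl
      rw [hc, hhand2]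
      simp [Finset.sum_const, Finset.card_univ]
      push_cast
      ring
    rw [etaVal, hedges] at heta
    have : (2 : ℝ) * S.card ≤ ((G.induce (S : Set V)).edgeFinset.card : ℝ) + 3 := by
      linarith [hsumle, hsum2, heta]
    exact_mod_cast this
  -- transfer of hypotheses to the induced graph
  have htwo' : ∀ v : ((S : Set V) : Type), 2 ≤ (G.induce (S : Set V)).degree v := by
    intro v
    have := hdeg v.1 v.2
    have hmem : v.1 ∈ S := v.2
    rw [show v = ⟨v.1, v.2⟩ from rfl, this]
    exact hdelta v.1 hmem
  have hfreeS : ¬ ContainsSub (SimpleGraph.pathGraph 6) (G.induce (S : Set V)) := by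
    rintro ⟨f, hinj, hadj⟩
    refine hP6free ⟨fun i => ⟨(f i : V), hSnbr (f i).1 (f i).2⟩, ?_, ?_⟩
    · intro i j h
      have hval := Subtype.ext_iff.mp h
      exact hinj (Subtype.ext hval)
    · intro i j hij
      exact hadj hij
  have hcard6 : 6 ≤ Fintype.card ((S : Set V) : Type) := by rw [hcardS]; exact hScard
  have hedge' : 2 * Fintype.card ((S : Set V) : Type) - 3
      ≤ (G.induce (S : Set V)).edgeFinset.card := by
    rw [hcardS]
    omega
  obtain ⟨iso⟩ := EtaAux.structure_B hSconn hfreeS htwo' hcard6 hedge'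
  rw [← hcardS]
  exact ⟨iso⟩
end
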